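/- arXiv:1410.0339 — 7 statements merged into one kernel-verified Lean document; each statement's English description precedes it below -/
import Mathlib

section
/- Let A be an n×n complex block shift with superdiagonal blocks A_1, …, A_{k-1}, where A_j is an n_j×n_{j+1} complex matrix, and let A' be the k×k matrix with (j, j+1) entry equal to ‖A_j‖ (the operator norm of A_j) for 1 ≤ j ≤ k-1 and all other entries zero. Then w(A) ≤ w(A'). -/
/-- The numerical radius `w(M)` of a square complex matrix, acting on Euclidean space:
`w(M) = sup {|⟨Mx, x⟩| : ‖x‖ = 1}` (here `inner x (M x)` is Mathlib's inner product, conjugate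
linear in the first variable, so it equals the paper's `⟨Mx, x⟩`). -/
noncomputable def numRadius {ι : Type*} [Fintype ι] [DecidableEq ι] (M : Matrix ι ι ℂ) : ℝ :=
  sSup {r : ℝ | ∃ x : EuclideanSpace ℂ ι, ‖x‖ = 1 ∧
    ‖(inner ℂ x (Matrix.toEuclideanLin M x) : ℂ)‖ = r}

/-- The operator norm `‖A‖ = max {‖Ax‖ : ‖x‖ = 1}` of a rectangular complex matrix. -/
noncomputable def opNorm {m n : Type*} [Fintype m] [Fintype n] [DecidableEq n]
    (A : Matrix m n ℂ) : ℝ :=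
  sSup {r : ℝ | ∃ x : EuclideanSpace ℂ n, ‖x‖ = 1 ∧ ‖Matrix.toEuclideanLin A x‖ = r}

/-- The `(k+1) × (k+1)` complex matrix with prescribed entries `c 0, …, c (k-1)` on the
superdiagonal and zeros elsewhere. -/
def superdiagMatrix {k : ℕ} (c : Fin k → ℂ) : Matrix (Fin (k + 1)) (Fin (k + 1)) ℂ :=
  Matrix.of fun i j => if h : (i : ℕ) < k ∧ (j : ℕ) = (i : ℕ) + 1 then c ⟨i, h.1⟩ else 0

/-- The block shift with `k+1` diagonal blocks of sizes `n 0, …, n k` and the rectangular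
matrices `B j` (of size `n j × n (j+1)`) in the `(j, j+1)` block positions, zeros elsewhere. -/
noncomputable def blockShiftMatrix {k : ℕ} (n : Fin (k + 1) → ℕ)
    (B : ∀ j : Fin k, Matrix (Fin (n j.castSucc)) (Fin (n j.succ)) ℂ) :
    Matrix ((j : Fin (k + 1)) × Fin (n j)) ((j : Fin (k + 1)) × Fin (n j)) ℂ :=
  Matrix.of fun p q => ∑ j : Fin k,
    if h : p.1 = j.castSucc ∧ q.1 = j.succ
    then B j (Fin.cast (congrArg n h.1) p.2) (Fin.cast (congrArg n h.2) q.2)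
    else 0

section Aux

open Finset

/-- Membership bound for the numerical radius set. -/
lemma numRadius_set_bddAbove {ι : Type*} [Fintype ι] [DecidableEq ι] (M : Matrix ι ι ℂ) :
    BddAbove {r : ℝ | ∃ x : EuclideanSpace ℂ ι, ‖x‖ = 1 ∧
      ‖(inner ℂ x (Matrix.toEuclideanLin M x) : ℂ)‖ = r} := by
  refine ⟨‖LinearMap.toContinuousLinearMap (Matrix.toEuclideanLin M)‖, ?_⟩
  rintro r ⟨x, hx, rfl⟩
  calc ‖(inner ℂ x (Matrix.toEuclideanLin M x) : ℂ)‖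
      ≤ ‖x‖ * ‖Matrix.toEuclideanLin M x‖ := by
        simpa using norm_inner_le_norm (𝕜 := ℂ) x (Matrix.toEuclideanLin M x)
    _ ≤ ‖x‖ * (‖LinearMap.toContinuousLinearMap (Matrix.toEuclideanLin M)‖ * ‖x‖) := by
        have h := (LinearMap.toContinuousLinearMap (Matrix.toEuclideanLin M)).le_opNorm x
        rw [LinearMap.coe_toContinuousLinearMap'] at h
        exact mul_le_mul_of_nonneg_left h (norm_nonneg x)
    _ = ‖LinearMap.toContinuousLinearMap (Matrix.toEuclideanLin M)‖ := by rw [hx]; ring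

lemma le_numRadius {ι : Type*} [Fintype ι] [DecidableEq ι] (M : Matrix ι ι ℂ)
    {x : EuclideanSpace ℂ ι} (hx : ‖x‖ = 1) :
    ‖(inner ℂ x (Matrix.toEuclideanLin M x) : ℂ)‖ ≤ numRadius M :=
  le_csSup (numRadius_set_bddAbove M) ⟨x, hx, rfl⟩

lemma opNorm_nonneg' {m n : Type*} [Fintype m] [Fintype n] [DecidableEq n]
    (A : Matrix m n ℂ) : 0 ≤ opNorm A :=
  Real.sSup_nonneg (by rintro r ⟨x, hx, rfl⟩; positivity)

lemma opNorm_set_bddAbove {m n : Type*} [Fintype m] [Fintype n] [DecidableEq n]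
    (A : Matrix m n ℂ) :
    BddAbove {r : ℝ | ∃ x : EuclideanSpace ℂ n, ‖x‖ = 1 ∧ ‖Matrix.toEuclideanLin A x‖ = r} := by
  refine ⟨‖LinearMap.toContinuousLinearMap (Matrix.toEuclideanLin A)‖, ?_⟩
  rintro r ⟨x, hx, rfl⟩
  have h := (LinearMap.toContinuousLinearMap (Matrix.toEuclideanLin A)).le_opNorm x
  rw [LinearMap.coe_toContinuousLinearMap'] at h
  simpa [hx] using h

lemma norm_le_opNorm_mul {m n : Type*} [Fintype m] [Fintype n] [DecidableEq n]
    (A : Matrix m n ℂ) (x : EuclideanSpace ℂ n) :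
    ‖Matrix.toEuclideanLin A x‖ ≤ opNorm A * ‖x‖ := by
  rcases eq_or_ne x 0 with rfl | hx
  · simp
  · have hn : (0:ℝ) < ‖x‖ := norm_pos_iff.2 hx
    set u : EuclideanSpace ℂ n := ((‖x‖ : ℂ))⁻¹ • x with hu
    have hu1 : ‖u‖ = 1 := by
      rw [hu, norm_smul]
      simp [norm_inv, hn.ne']
    have hmem : ‖Matrix.toEuclideanLin A u‖ ≤ opNorm A :=
      le_csSup (opNorm_set_bddAbove A) ⟨u, hu1, rfl⟩
    have hAu : ‖Matrix.toEuclideanLin A u‖ = ‖x‖⁻¹ * ‖Matrix.toEuclideanLin A x‖ := by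
      rw [hu, map_smul, norm_smul]
      simp
    rw [hAu] at hmem
    calc ‖Matrix.toEuclideanLin A x‖ = ‖x‖ * (‖x‖⁻¹ * ‖Matrix.toEuclideanLin A x‖) := by
          field_simp
      _ ≤ ‖x‖ * opNorm A := mul_le_mul_of_nonneg_left hmem hn.le
      _ = opNorm A * ‖x‖ := mul_comm _ _

lemma superdiagMatrix_eq_sum {k : ℕ} (c : Fin k → ℂ) (i i' : Fin (k + 1)) :
    superdiagMatrix c i i' = ∑ j : Fin k,
      if i = j.castSucc ∧ i' = j.succ then c j else 0 := by
  by_cases h : (i : ℕ) < k ∧ (i' : ℕ) = (i : ℕ) + 1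
  · have hval : superdiagMatrix c i i' = c ⟨i, h.1⟩ := by
      simp [superdiagMatrix, h]
    rw [hval]
    rw [Finset.sum_eq_single (⟨(i : ℕ), h.1⟩ : Fin k)]
    · have h1 : i = (⟨(i : ℕ), h.1⟩ : Fin k).castSucc := by
        apply Fin.ext; simp
      have h2 : i' = (⟨(i : ℕ), h.1⟩ : Fin k).succ := by
        apply Fin.ext; simp [h.2]
      rw [if_pos ⟨h1, h2⟩]
    · intro j _ hj
      rw [if_neg]
      rintro ⟨rfl, -⟩
      exact hj (by apply Fin.ext; simp)
    · intro h; exact absurd (Finset.mem_univ _) h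
  · have hval : superdiagMatrix c i i' = 0 := by
      simp [superdiagMatrix, h]
    rw [hval, eq_comm]
    apply Finset.sum_eq_zero
    intro j _
    rw [if_neg]
    rintro ⟨rfl, rfl⟩
    exact h ⟨by simp, by simp⟩

end Aux

/-- Sum over a sigma fintype. -/
lemma sum_sigma_univ {ι : Type*} [Fintype ι] (β : ι → Type*) [∀ i, Fintype (β i)]
    (f : (Σ i, β i) → ℂ) : ∑ p : Σ i, β i, f p = ∑ i, ∑ b : β i, f ⟨i, b⟩ := by
  rw [← Finset.univ_sigma_univ, Finset.sum_sigma]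

lemma sum_sigma_univ_real {ι : Type*} [Fintype ι] (β : ι → Type*) [∀ i, Fintype (β i)]
    (f : (Σ i, β i) → ℝ) : ∑ p : Σ i, β i, f p = ∑ i, ∑ b : β i, f ⟨i, b⟩ := by
  rw [← Finset.univ_sigma_univ, Finset.sum_sigma]

set_option maxHeartbeats 2000000 in
/-- For a block shift `A` with superdiagonal blocks `A_j`, the numerical
radius of `A` is at most that of the scalar shift with superdiagonal entries `‖A_j‖`. -/
theorem numRadius_blockShift_le_numRadius_superdiag_opNorm {k : ℕ} (n : Fin (k + 1) → ℕ)
    (B : ∀ j : Fin k, Matrix (Fin (n j.castSucc)) (Fin (n j.succ)) ℂ) :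
    numRadius (blockShiftMatrix n B)
      ≤ numRadius (superdiagMatrix fun j => (opNorm (B j) : ℂ)) := by
  classical
  set c : Fin k → ℂ := fun j => (opNorm (B j) : ℂ) with hc
  apply Real.sSup_le
  · rintro r ⟨x, hx, rfl⟩
    -- block components of x
    set blk : ∀ i : Fin (k + 1), EuclideanSpace ℂ (Fin (n i)) :=
      fun i => WithLp.toLp 2 (fun a => x ⟨i, a⟩) with hblk
    -- the common triple sum
    set T : ℂ := ∑ j : Fin k, ∑ a : Fin (n j.castSucc), ∑ b : Fin (n j.succ),
      starRingEnd ℂ (x ⟨j.castSucc, a⟩) * (B j a b * x ⟨j.succ, b⟩) with hT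
    -- key identity: the inner product decomposes as a sum over blocks
    have key : (inner ℂ x (Matrix.toEuclideanLin (blockShiftMatrix n B) x) : ℂ)
        = ∑ j : Fin k,
          (inner ℂ (blk j.castSucc) (Matrix.toEuclideanLin (B j) (blk j.succ)) : ℂ) := by
      have hrhs : ∑ j : Fin k,
          (inner ℂ (blk j.castSucc) (Matrix.toEuclideanLin (B j) (blk j.succ)) : ℂ) = T := by
        rw [hT]
        refine Finset.sum_congr rfl fun j _ => ?_
        rw [PiLp.inner_apply]
        refine Finset.sum_congr rfl fun a _ => ?_
        have : (Matrix.toEuclideanLin (B j) (blk j.succ)) a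
            = ∑ b, B j a b * x ⟨j.succ, b⟩ := rfl
        rw [show (inner ℂ (blk j.castSucc a) ((Matrix.toEuclideanLin (B j) (blk j.succ)) a) : ℂ)
            = starRingEnd ℂ (x ⟨j.castSucc, a⟩) * ∑ b, B j a b * x ⟨j.succ, b⟩ from by
          rw [← this, RCLike.inner_apply']]
        rw [Finset.mul_sum]
      rw [hrhs, hT]
      have lhs1 : (inner ℂ x (Matrix.toEuclideanLin (blockShiftMatrix n B) x) : ℂ)
          = ∑ p, ∑ q, starRingEnd ℂ (x p) * (blockShiftMatrix n B p q * x q) := by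
        rw [PiLp.inner_apply]
        refine Finset.sum_congr rfl fun p _ => ?_
        rw [show ((Matrix.toEuclideanLin (blockShiftMatrix n B) x) p : ℂ)
            = ∑ q, blockShiftMatrix n B p q * x q from rfl]
        rw [show (inner ℂ (x p) (∑ q, blockShiftMatrix n B p q * x q) : ℂ)
            = starRingEnd ℂ (x p) * ∑ q, blockShiftMatrix n B p q * x q from RCLike.inner_apply' _ _]
        rw [Finset.mul_sum]
      rw [lhs1]
      have lhs2 : ∀ p q, starRingEnd ℂ (x p) * (blockShiftMatrix n B p q * x q)
          = ∑ j : Fin k, starRingEnd ℂ (x p) *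
            ((if h : p.1 = j.castSucc ∧ q.1 = j.succ
              then B j (Fin.cast (congrArg n h.1) p.2) (Fin.cast (congrArg n h.2) q.2)
              else 0) * x q) := by
        intro p q
        simp only [blockShiftMatrix, Matrix.of_apply]
        rw [Finset.sum_mul, Finset.mul_sum]
      simp only [lhs2]
      have hswap : ∀ p : (i : Fin (k+1)) × Fin (n i), ∑ q : (i : Fin (k+1)) × Fin (n i),
          ∑ j : Fin k, starRingEnd ℂ (x p) *
            ((if h : p.1 = j.castSucc ∧ q.1 = j.succ
              then B j (Fin.cast (congrArg n h.1) p.2) (Fin.cast (congrArg n h.2) q.2)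
              else 0) * x q)
          = ∑ j : Fin k, ∑ q : (i : Fin (k+1)) × Fin (n i), starRingEnd ℂ (x p) *
            ((if h : p.1 = j.castSucc ∧ q.1 = j.succ
              then B j (Fin.cast (congrArg n h.1) p.2) (Fin.cast (congrArg n h.2) q.2)
              else 0) * x q) := fun p => Finset.sum_comm
      simp only [hswap]
      rw [Finset.sum_comm]
      refine Finset.sum_congr rfl fun j _ => ?_
      -- now fixed j : both remaining sums over sigma types
      rw [sum_sigma_univ, Finset.sum_eq_single j.castSucc]
      · refine Finset.sum_congr rfl fun a _ => ?_
        rw [sum_sigma_univ, Finset.sum_eq_single j.succ]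
        · refine Finset.sum_congr rfl fun b _ => ?_
          rw [dif_pos ⟨rfl, rfl⟩]
          rfl
        · intro i _ hi
          apply Finset.sum_eq_zero
          intro b _
          rw [dif_neg (by rintro ⟨-, h2⟩; exact hi h2)]
          ring
        · intro h; exact absurd (Finset.mem_univ _) h
      · intro i _ hi
        apply Finset.sum_eq_zero
        intro a _
        apply Finset.sum_eq_zero
        intro q _
        rw [dif_neg (by rintro ⟨h1, -⟩; exact hi h1)]
        ring
      · intro h; exact absurd (Finset.mem_univ _) h
    -- bound the inner product
    have hb1 : ‖(inner ℂ x (Matrix.toEuclideanLin (blockShiftMatrix n B) x) : ℂ)‖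
        ≤ ∑ j : Fin k, opNorm (B j) * (‖blk j.castSucc‖ * ‖blk j.succ‖) := by
      rw [key]
      refine le_trans (norm_sum_le _ _) ?_
      refine Finset.sum_le_sum fun j _ => ?_
      calc ‖(inner ℂ (blk j.castSucc) (Matrix.toEuclideanLin (B j) (blk j.succ)) : ℂ)‖
          ≤ ‖blk j.castSucc‖ * ‖Matrix.toEuclideanLin (B j) (blk j.succ)‖ := by
            simpa using
              norm_inner_le_norm (𝕜 := ℂ) (blk j.castSucc) (Matrix.toEuclideanLin (B j) (blk j.succ))
        _ ≤ ‖blk j.castSucc‖ * (opNorm (B j) * ‖blk j.succ‖) :=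
            mul_le_mul_of_nonneg_left (norm_le_opNorm_mul (B j) (blk j.succ)) (norm_nonneg _)
        _ = opNorm (B j) * (‖blk j.castSucc‖ * ‖blk j.succ‖) := by ring
    -- the comparison vector y
    set y : EuclideanSpace ℂ (Fin (k + 1)) := WithLp.toLp 2 (fun i => ((‖blk i‖ : ℝ) : ℂ)) with hy
    have hynorm : ‖y‖ = 1 := by
      rw [EuclideanSpace.norm_eq]
      rw [EuclideanSpace.norm_eq] at hx
      rw [← hx]
      congr 1
      rw [sum_sigma_univ_real (fun i => Fin (n i)) (fun p => ‖x p‖ ^ 2)]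
      refine Finset.sum_congr rfl fun i _ => ?_
      have h1 : ‖y i‖ = ‖blk i‖ := by
        simp only [hy, Complex.norm_real, Real.norm_eq_abs, abs_norm]
      have h3 : (0:ℝ) ≤ ∑ a : Fin (n i), ‖blk i a‖ ^ 2 :=
        Finset.sum_nonneg fun a _ => sq_nonneg _
      rw [h1, EuclideanSpace.norm_eq, Real.sq_sqrt h3]
    -- inner product with the superdiagonal matrix
    have hyA : (inner ℂ y (Matrix.toEuclideanLin (superdiagMatrix c) y) : ℂ)
        = ∑ j : Fin k, c j * ((‖blk j.castSucc‖ * ‖blk j.succ‖ : ℝ) : ℂ) := by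
      have lhs1 : (inner ℂ y (Matrix.toEuclideanLin (superdiagMatrix c) y) : ℂ)
          = ∑ i, ∑ i', starRingEnd ℂ (y i) * (superdiagMatrix c i i' * y i') := by
        rw [PiLp.inner_apply]
        refine Finset.sum_congr rfl fun i _ => ?_
        rw [show ((Matrix.toEuclideanLin (superdiagMatrix c) y) i : ℂ)
            = ∑ i', superdiagMatrix c i i' * y i' from rfl]
        rw [show (inner ℂ (y i) (∑ i', superdiagMatrix c i i' * y i') : ℂ)
            = starRingEnd ℂ (y i) * ∑ i', superdiagMatrix c i i' * y i' from RCLike.inner_apply' _ _]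
        rw [Finset.mul_sum]
      rw [lhs1]
      have lhs2 : ∀ i i', starRingEnd ℂ (y i) * (superdiagMatrix c i i' * y i')
          = ∑ j : Fin k, starRingEnd ℂ (y i) *
            ((if i = j.castSucc ∧ i' = j.succ then c j else 0) * y i') := by
        intro i i'
        rw [superdiagMatrix_eq_sum, Finset.sum_mul, Finset.mul_sum]
      simp only [lhs2]
      have hsw : ∀ i : Fin (k+1), ∑ i' : Fin (k+1), ∑ j : Fin k, starRingEnd ℂ (y i) *
            ((if i = j.castSucc ∧ i' = j.succ then c j else 0) * y i')
          = ∑ j : Fin k, ∑ i' : Fin (k+1), starRingEnd ℂ (y i) *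
            ((if i = j.castSucc ∧ i' = j.succ then c j else 0) * y i') :=
        fun i => Finset.sum_comm
      simp only [hsw]
      rw [Finset.sum_comm]
      refine Finset.sum_congr rfl fun j _ => ?_
      rw [Finset.sum_eq_single j.castSucc]
      · rw [Finset.sum_eq_single j.succ]
        · rw [if_pos ⟨rfl, rfl⟩]
          rw [hy]
          push_cast
          rw [Complex.conj_ofReal]
          ring
        · intro i' _ hi'
          rw [if_neg (by rintro ⟨-, h2⟩; exact hi' h2)]
          ring
        · intro h; exact absurd (Finset.mem_univ _) h
      · intro i _ hi
        apply Finset.sum_eq_zero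
        intro i' _
        rw [if_neg (by rintro ⟨h1, -⟩; exact hi h1)]
        ring
      · intro h; exact absurd (Finset.mem_univ _) h
    have habs : ‖(inner ℂ y (Matrix.toEuclideanLin (superdiagMatrix c) y) : ℂ)‖
        = ∑ j : Fin k, opNorm (B j) * (‖blk j.castSucc‖ * ‖blk j.succ‖) := by
      rw [hyA]
      have : ∑ j : Fin k, c j * ((‖blk j.castSucc‖ * ‖blk j.succ‖ : ℝ) : ℂ)
          = (((∑ j : Fin k, opNorm (B j) * (‖blk j.castSucc‖ * ‖blk j.succ‖)) : ℝ) : ℂ) := by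
        push_cast [hc]
        rfl
      rw [this, Complex.norm_real, Real.norm_eq_abs, abs_of_nonneg]
      refine Finset.sum_nonneg fun j _ => ?_
      have := opNorm_nonneg' (B j)
      positivity
    calc ‖(inner ℂ x (Matrix.toEuclideanLin (blockShiftMatrix n B) x) : ℂ)‖
        ≤ ∑ j : Fin k, opNorm (B j) * (‖blk j.castSucc‖ * ‖blk j.succ‖) := hb1
      _ = ‖(inner ℂ y (Matrix.toEuclideanLin (superdiagMatrix c) y) : ℂ)‖ := habs.symm
      _ ≤ numRadius (superdiagMatrix c) := le_numRadius (superdiagMatrix c) hynorm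
  · -- 0 ≤ numRadius of the superdiagonal matrix
    have h1 : ‖(EuclideanSpace.single (0 : Fin (k+1)) (1:ℂ) : EuclideanSpace ℂ (Fin (k+1)))‖ = 1 := by
      simp
    have := le_numRadius (superdiagMatrix c) h1
    exact le_trans (by positivity) this
end

section
/- Let A be the 6×6 complex matrix with nonzero entries only A(1,2) = √2, A(3,4) = 1, A(5,6) = 1 (all other entries zero), and let A' be the 5×5 matrix with superdiagonal entries √2, 0, 1, 1 (in that order) and all other entries zero. Then w(A) = w(A') = √2/2, but A is not unitarily similar to A' ⊕ [0] (the direct sum of A' with the 1×1 zero matrix). -/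
/-- Two square complex matrices (possibly indexed by different finite types) are unitarily
similar if a unitary operator, i.e. a linear isometric equivalence of the underlying Euclidean
spaces, intertwines the induced operators. -/
def UnitarilySimilar {ι κ : Type*} [Fintype ι] [Fintype κ] [DecidableEq ι] [DecidableEq κ]
    (A : Matrix ι ι ℂ) (B : Matrix κ κ ℂ) : Prop :=
  ∃ U : EuclideanSpace ℂ ι ≃ₗᵢ[ℂ] EuclideanSpace ℂ κ,
    ∀ x, U (Matrix.toEuclideanLin A x) = Matrix.toEuclideanLin B (U x)

open Matrix

/- ### Auxiliary definitions -/

noncomputable abbrev exA6 : Matrix (Fin 6) (Fin 6) ℂ :=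
  !![0, (Real.sqrt 2 : ℂ), 0, 0, 0, 0; 0, 0, 0, 0, 0, 0; 0, 0, 0, 1, 0, 0;
     0, 0, 0, 0, 0, 0; 0, 0, 0, 0, 0, 1; 0, 0, 0, 0, 0, 0]

noncomputable abbrev exA5 : Matrix (Fin 5) (Fin 5) ℂ :=
  !![0, (Real.sqrt 2 : ℂ), 0, 0, 0; 0, 0, 0, 0, 0; 0, 0, 0, 1, 0;
     0, 0, 0, 0, 1; 0, 0, 0, 0, 0]

/- ### Real inequalities -/

lemma ex_ineq6 (a b c d e f s : ℝ) (hs : s^2 = 2) (h1 : 1 ≤ s)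
    (hc : 0 ≤ c) (hd : 0 ≤ d) (he : 0 ≤ e) (hf : 0 ≤ f)
    (h : a^2+b^2+c^2+d^2+e^2+f^2 = 1) : s*(a*b) + c*d + e*f ≤ s/2 := by
  nlinarith [sq_nonneg (a-b), sq_nonneg (c-d), sq_nonneg (e-f), sq_nonneg (a+b)]

lemma ex_ineq5 (a b c d e s : ℝ) (hs : s^2 = 2) (h1 : 1 ≤ s)
    (h : a^2+b^2+c^2+d^2+e^2 = 1) : s*(a*b) + c*d + d*e ≤ s/2 := by
  nlinarith [sq_nonneg (a-b), sq_nonneg (c+e-s*d), sq_nonneg (c-e), sq_nonneg (c+e)]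

/- ### Inner product formulas -/

lemma ex_inner6 (x : EuclideanSpace ℂ (Fin 6)) :
    (inner ℂ x (Matrix.toEuclideanLin exA6 x) : ℂ) =
      (starRingEnd ℂ) (x 0) * ((Real.sqrt 2 : ℂ) * x 1) + (starRingEnd ℂ) (x 2) * x 3
        + (starRingEnd ℂ) (x 4) * x 5 := by
  have h5 : (5 : Fin 6) = (4 : Fin 5).succ := rfl
  simp [PiLp.inner_apply, Matrix.toEuclideanLin_apply, Matrix.mulVec, dotProduct,
    RCLike.inner_apply', Fin.sum_univ_six, h5, Matrix.cons_val_succ]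
  ring

lemma ex_inner5 (x : EuclideanSpace ℂ (Fin 5)) :
    (inner ℂ x (Matrix.toEuclideanLin exA5 x) : ℂ) =
      (starRingEnd ℂ) (x 0) * ((Real.sqrt 2 : ℂ) * x 1) + (starRingEnd ℂ) (x 2) * x 3
        + (starRingEnd ℂ) (x 3) * x 4 := by
  have h4 : (4 : Fin 5) = (3 : Fin 4).succ := rfl
  simp [PiLp.inner_apply, Matrix.toEuclideanLin_apply, Matrix.mulVec, dotProduct,
    RCLike.inner_apply', Fin.sum_univ_five, h4, Matrix.cons_val_succ]
  ring

/- ### norm-one sums -/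

lemma ex_sumsq {n : ℕ} (x : EuclideanSpace ℂ (Fin n)) (hx : ‖x‖ = 1) :
    ∑ i, ‖x i‖ ^ 2 = 1 := by
  rw [EuclideanSpace.norm_eq] at hx
  have h := congrArg (· ^ 2) hx
  simp only [Real.sq_sqrt (Finset.sum_nonneg fun i _ => sq_nonneg _), one_pow] at h
  simpa using h

/- ### Upper bounds -/

lemma ex_sqrt2_sq : Real.sqrt 2 ^ 2 = 2 := Real.sq_sqrt (by norm_num)
lemma ex_one_le_sqrt2 : 1 ≤ Real.sqrt 2 := by
  nlinarith [Real.sq_sqrt (by norm_num : (0:ℝ) ≤ 2), Real.sqrt_nonneg 2]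

lemma ex_ub6 (x : EuclideanSpace ℂ (Fin 6)) (hx : ‖x‖ = 1) :
    ‖(inner ℂ x (Matrix.toEuclideanLin exA6 x) : ℂ)‖ ≤ Real.sqrt 2 / 2 := by
  have hsum := ex_sumsq x hx
  rw [Fin.sum_univ_six] at hsum
  rw [ex_inner6]
  calc ‖(starRingEnd ℂ) (x 0) * ((Real.sqrt 2 : ℂ) * x 1)
          + (starRingEnd ℂ) (x 2) * x 3 + (starRingEnd ℂ) (x 4) * x 5‖
      ≤ ‖(starRingEnd ℂ) (x 0) * ((Real.sqrt 2 : ℂ) * x 1)‖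
          + ‖(starRingEnd ℂ) (x 2) * x 3‖
          + ‖(starRingEnd ℂ) (x 4) * x 5‖ := by
        refine le_trans (norm_add_le _ _) ?_
        gcongr
        exact norm_add_le _ _
    _ = Real.sqrt 2 * (‖x 0‖ * ‖x 1‖)
          + ‖x 2‖ * ‖x 3‖
          + ‖x 4‖ * ‖x 5‖ := by
        simp [_root_.map_mul, Complex.norm_conj, Complex.norm_real, Real.norm_eq_abs,
          abs_of_nonneg (Real.sqrt_nonneg 2)]
        ring
    _ ≤ Real.sqrt 2 / 2 :=
        ex_ineq6 _ _ _ _ _ _ _ ex_sqrt2_sq ex_one_le_sqrt2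
          (norm_nonneg _) (norm_nonneg _) (norm_nonneg _)
          (norm_nonneg _) hsum

lemma ex_ub5 (x : EuclideanSpace ℂ (Fin 5)) (hx : ‖x‖ = 1) :
    ‖(inner ℂ x (Matrix.toEuclideanLin exA5 x) : ℂ)‖ ≤ Real.sqrt 2 / 2 := by
  have hsum := ex_sumsq x hx
  rw [Fin.sum_univ_five] at hsum
  rw [ex_inner5]
  calc ‖(starRingEnd ℂ) (x 0) * ((Real.sqrt 2 : ℂ) * x 1)
          + (starRingEnd ℂ) (x 2) * x 3 + (starRingEnd ℂ) (x 3) * x 4‖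
      ≤ ‖(starRingEnd ℂ) (x 0) * ((Real.sqrt 2 : ℂ) * x 1)‖
          + ‖(starRingEnd ℂ) (x 2) * x 3‖
          + ‖(starRingEnd ℂ) (x 3) * x 4‖ := by
        refine le_trans (norm_add_le _ _) ?_
        gcongr
        exact norm_add_le _ _
    _ = Real.sqrt 2 * (‖x 0‖ * ‖x 1‖)
          + ‖x 2‖ * ‖x 3‖
          + ‖x 3‖ * ‖x 4‖ := by
        simp [_root_.map_mul, Complex.norm_conj, Complex.norm_real, Real.norm_eq_abs,
          abs_of_nonneg (Real.sqrt_nonneg 2)]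
        ring
    _ ≤ Real.sqrt 2 / 2 :=
        ex_ineq5 _ _ _ _ _ _ ex_sqrt2_sq ex_one_le_sqrt2 hsum

/- ### Witness vectors -/

noncomputable def exv6 : EuclideanSpace ℂ (Fin 6) :=
  (WithLp.equiv 2 (Fin 6 → ℂ)).symm
    ![((Real.sqrt 2 / 2 : ℝ) : ℂ), ((Real.sqrt 2 / 2 : ℝ) : ℂ), 0, 0, 0, 0]

noncomputable def exv5 : EuclideanSpace ℂ (Fin 5) :=
  (WithLp.equiv 2 (Fin 5 → ℂ)).symm
    ![((Real.sqrt 2 / 2 : ℝ) : ℂ), ((Real.sqrt 2 / 2 : ℝ) : ℂ), 0, 0, 0]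

lemma ex_halfsq : (Real.sqrt 2 / 2) ^ 2 + (Real.sqrt 2 / 2) ^ 2 = 1 := by
  nlinarith [Real.sq_sqrt (by norm_num : (0:ℝ) ≤ 2)]

lemma ex_norm_v6 : ‖exv6‖ = 1 := by
  have h5 : (5 : Fin 6) = (4 : Fin 5).succ := rfl
  rw [EuclideanSpace.norm_eq]
  simp only [exv6, WithLp.equiv_symm_apply, WithLp.ofLp_toLp, Fin.sum_univ_six, h5, Matrix.cons_val_succ,
    Matrix.cons_val_zero, Matrix.cons_val_one, Matrix.head_cons, Matrix.cons_val_two,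
    Matrix.cons_val_three, Matrix.cons_val_four, Matrix.tail_cons, norm_zero,
    Complex.norm_real, Real.norm_eq_abs]
  rw [abs_of_nonneg (by positivity)]
  rw [show (0:ℝ)^2 = 0 by norm_num]
  rw [show (Real.sqrt 2 / 2) ^ 2 + (Real.sqrt 2/2) ^ 2 + 0 + 0 + 0 + 0 = 1 by
    nlinarith [ex_halfsq]]
  exact Real.sqrt_one

lemma ex_norm_v5 : ‖exv5‖ = 1 := by
  have h4 : (4 : Fin 5) = (3 : Fin 4).succ := rfl
  rw [EuclideanSpace.norm_eq]
  simp only [exv5, WithLp.equiv_symm_apply, WithLp.ofLp_toLp, Fin.sum_univ_five, h4, Matrix.cons_val_succ,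
    Matrix.cons_val_zero, Matrix.cons_val_one, Matrix.head_cons, Matrix.cons_val_two,
    Matrix.cons_val_three, Matrix.cons_val_four, Matrix.tail_cons, norm_zero,
    Complex.norm_real, Real.norm_eq_abs]
  rw [abs_of_nonneg (by positivity)]
  rw [show (0:ℝ)^2 = 0 by norm_num]
  rw [show (Real.sqrt 2 / 2) ^ 2 + (Real.sqrt 2/2) ^ 2 + 0 + 0 + 0 = 1 by
    nlinarith [ex_halfsq]]
  exact Real.sqrt_one

lemma ex_sqrt2_mul : ((Real.sqrt 2 : ℝ) : ℂ) * ((Real.sqrt 2 : ℝ) : ℂ) = 2 := by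
  rw [← Complex.ofReal_mul, Real.mul_self_sqrt (by norm_num)]; norm_num

lemma ex_val_v6 : ‖(inner ℂ exv6 (Matrix.toEuclideanLin exA6 exv6) : ℂ)‖
    = Real.sqrt 2 / 2 := by
  have e0 : exv6 0 = ((Real.sqrt 2 / 2 : ℝ) : ℂ) := rfl
  have e1 : exv6 1 = ((Real.sqrt 2 / 2 : ℝ) : ℂ) := rfl
  have e2 : exv6 2 = 0 := rfl
  have e4 : exv6 4 = 0 := rfl
  have key : (inner ℂ exv6 (Matrix.toEuclideanLin exA6 exv6) : ℂ)
      = ((Real.sqrt 2 / 2 : ℝ) : ℂ) := by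
    rw [ex_inner6, e0, e1, e2, e4, Complex.conj_ofReal]
    simp only [map_zero, zero_mul, add_zero]
    push_cast
    linear_combination (((Real.sqrt 2 : ℝ) : ℂ)/4) * ex_sqrt2_mul
  rw [key, Complex.norm_real, Real.norm_eq_abs, abs_of_nonneg (by positivity)]

lemma ex_val_v5 : ‖(inner ℂ exv5 (Matrix.toEuclideanLin exA5 exv5) : ℂ)‖
    = Real.sqrt 2 / 2 := by
  have e0 : exv5 0 = ((Real.sqrt 2 / 2 : ℝ) : ℂ) := rfl
  have e1 : exv5 1 = ((Real.sqrt 2 / 2 : ℝ) : ℂ) := rfl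
  have e2 : exv5 2 = 0 := rfl
  have e3 : exv5 3 = 0 := rfl
  have key : (inner ℂ exv5 (Matrix.toEuclideanLin exA5 exv5) : ℂ)
      = ((Real.sqrt 2 / 2 : ℝ) : ℂ) := by
    rw [ex_inner5, e0, e1, e2, e3, Complex.conj_ofReal]
    simp only [map_zero, zero_mul, add_zero]
    push_cast
    linear_combination (((Real.sqrt 2 : ℝ) : ℂ)/4) * ex_sqrt2_mul
  rw [key, Complex.norm_real, Real.norm_eq_abs, abs_of_nonneg (by positivity)]

/- ### A6 squares to zero -/

lemma ex_A6_sq : exA6 * exA6 = 0 := by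
  have h5 : (5 : Fin 6) = (4 : Fin 5).succ := rfl
  ext i j
  fin_cases i <;> fin_cases j <;>
    simp [Matrix.mul_apply, Fin.sum_univ_six, h5, Matrix.cons_val_succ, Matrix.vecHead, Matrix.vecTail]


theorem ex_notsim :
    ¬ ∃ U : EuclideanSpace ℂ (Fin 6) ≃ₗᵢ[ℂ] EuclideanSpace ℂ (Fin 5 ⊕ Fin 1),
      ∀ x, U (Matrix.toEuclideanLin exA6 x)
        = Matrix.toEuclideanLin (Matrix.fromBlocks exA5 0 0 (0 : Matrix (Fin 1) (Fin 1) ℂ)) (U x) := by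
  rintro ⟨U, hU⟩
  set B : Matrix (Fin 5 ⊕ Fin 1) (Fin 5 ⊕ Fin 1) ℂ :=
    Matrix.fromBlocks exA5 0 0 (0 : Matrix (Fin 1) (Fin 1) ℂ) with hB
  set w : Fin 5 ⊕ Fin 1 → ℂ := Sum.elim ![0, 0, 0, 0, 1] ![0] with hw
  set v : EuclideanSpace ℂ (Fin 5 ⊕ Fin 1) := (WithLp.equiv 2 _).symm w with hv
  have key : Matrix.toEuclideanLin B (Matrix.toEuclideanLin B v)
      = U (Matrix.toEuclideanLin exA6 (Matrix.toEuclideanLin exA6 (U.symm v))) := by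
    rw [hU, hU, U.apply_symm_apply]
  have hz : Matrix.toEuclideanLin exA6 (Matrix.toEuclideanLin exA6 (U.symm v)) = 0 := by
    rw [Matrix.toEuclideanLin_apply, Matrix.toEuclideanLin_apply, WithLp.ofLp_toLp,
      Matrix.mulVec_mulVec, ex_A6_sq]
    simp
  rw [hz, map_zero] at key
  have h1 : (Matrix.toEuclideanLin B (Matrix.toEuclideanLin B v)) (Sum.inl 2) = 1 := by
    have h4 : (4 : Fin 5) = (3 : Fin 4).succ := rfl
    rw [Matrix.toEuclideanLin_apply, Matrix.toEuclideanLin_apply, WithLp.ofLp_toLp,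
      Matrix.mulVec_mulVec]
    show ((B * B) *ᵥ w) (Sum.inl 2) = 1
    simp [Matrix.mulVec, dotProduct, Fintype.sum_sum_type, Fin.sum_univ_five, hB, hw,
      h4, Matrix.cons_val_succ, Matrix.fromBlocks_multiply, Matrix.mul_apply]
  rw [key] at h1
  exact one_ne_zero h1.symm

/-- The 6×6 matrix with entries `√2, 1, 1` at positions `(1,2), (3,4), (5,6)`
and the 5×5 matrix with superdiagonal `√2, 0, 1, 1` both have numerical radius `√2/2`, yet the
6×6 matrix is not unitarily similar to the direct sum of the 5×5 one and a 1×1 zero. -/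
theorem example_upper_bound_equality_without_direct_summand :
    numRadius (!![0, (Real.sqrt 2 : ℂ), 0, 0, 0, 0;
                  0, 0, 0, 0, 0, 0;
                  0, 0, 0, 1, 0, 0;
                  0, 0, 0, 0, 0, 0;
                  0, 0, 0, 0, 0, 1;
                  0, 0, 0, 0, 0, 0]) = Real.sqrt 2 / 2 ∧
    numRadius (!![0, (Real.sqrt 2 : ℂ), 0, 0, 0;
                  0, 0, 0, 0, 0;
                  0, 0, 0, 1, 0;
                  0, 0, 0, 0, 1;
                  0, 0, 0, 0, 0]) = Real.sqrt 2 / 2 ∧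
    ¬ UnitarilySimilar
        (!![0, (Real.sqrt 2 : ℂ), 0, 0, 0, 0;
            0, 0, 0, 0, 0, 0;
            0, 0, 0, 1, 0, 0;
            0, 0, 0, 0, 0, 0;
            0, 0, 0, 0, 0, 1;
            0, 0, 0, 0, 0, 0])
        (Matrix.fromBlocks
          (!![0, (Real.sqrt 2 : ℂ), 0, 0, 0;
              0, 0, 0, 0, 0;
              0, 0, 0, 1, 0;
              0, 0, 0, 0, 1;
              0, 0, 0, 0, 0]) 0 0 (0 : Matrix (Fin 1) (Fin 1) ℂ)) := by
  refine ⟨?_, ?_, ?_⟩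
  · have hub : ∀ r ∈ {r : ℝ | ∃ x : EuclideanSpace ℂ (Fin 6), ‖x‖ = 1 ∧
        ‖(inner ℂ x (Matrix.toEuclideanLin exA6 x) : ℂ)‖ = r}, r ≤ Real.sqrt 2 / 2 := by
      rintro r ⟨x, hx, rfl⟩; exact ex_ub6 x hx
    have hmem : Real.sqrt 2 / 2 ∈ {r : ℝ | ∃ x : EuclideanSpace ℂ (Fin 6), ‖x‖ = 1 ∧
        ‖(inner ℂ x (Matrix.toEuclideanLin exA6 x) : ℂ)‖ = r} :=
      ⟨exv6, ex_norm_v6, ex_val_v6⟩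
    exact le_antisymm (csSup_le ⟨_, hmem⟩ hub) (le_csSup ⟨_, hub⟩ hmem)
  · have hub : ∀ r ∈ {r : ℝ | ∃ x : EuclideanSpace ℂ (Fin 5), ‖x‖ = 1 ∧
        ‖(inner ℂ x (Matrix.toEuclideanLin exA5 x) : ℂ)‖ = r}, r ≤ Real.sqrt 2 / 2 := by
      rintro r ⟨x, hx, rfl⟩; exact ex_ub5 x hx
    have hmem : Real.sqrt 2 / 2 ∈ {r : ℝ | ∃ x : EuclideanSpace ℂ (Fin 5), ‖x‖ = 1 ∧
        ‖(inner ℂ x (Matrix.toEuclideanLin exA5 x) : ℂ)‖ = r} :=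
      ⟨exv5, ex_norm_v5, ex_val_v5⟩
    exact le_antisymm (csSup_le ⟨_, hmem⟩ hub) (le_csSup ⟨_, hub⟩ hmem)
  · exact ex_notsim
end

section
/- Let A be an n×n complex block shift with superdiagonal blocks A_1, …, A_{k-1}, and let m = min_{1 ≤ j ≤ k-1} m(A_j). Then w(A) ≥ m·cos(π/(k+1)). -/
/-- The minimum modulus `m(A) = min {‖Ax‖ : ‖x‖ = 1}` of a rectangular complex matrix. -/
noncomputable def minModulus {m n : Type*} [Fintype m] [Fintype n] [DecidableEq n]
    (A : Matrix m n ℂ) : ℝ :=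
  sInf {r : ℝ | ∃ x : EuclideanSpace ℂ n, ‖x‖ = 1 ∧ ‖Matrix.toEuclideanLin A x‖ = r}

section BlockShiftHelpers

private lemma bs_trig_chain (θ : ℝ) (i : ℕ) :
    Real.sin (i * θ) + Real.sin ((i + 2) * θ) = 2 * Real.cos θ * Real.sin ((i + 1) * θ) := by
  have h1 : (i : ℝ) * θ = (i + 1) * θ - θ := by ring
  have h2 : ((i : ℝ) + 2) * θ = (i + 1) * θ + θ := by ring
  rw [h1, h2, Real.sin_sub, Real.sin_add]; ring

private lemma bs_trig_identity (k : ℕ) (θ : ℝ) (hθ : Real.sin ((k + 2) * θ) = 0) :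
    ∑ i ∈ Finset.range k, Real.sin ((i + 1) * θ) * Real.sin ((i + 2) * θ)
      = Real.cos θ * ∑ i ∈ Finset.range (k + 1), Real.sin ((i + 1) * θ) ^ 2 := by
  have key : ∑ i ∈ Finset.range (k+1),
        Real.sin ((i+1)*θ) * (Real.sin (i*θ) + Real.sin ((i+2)*θ))
      = 2 * Real.cos θ * ∑ i ∈ Finset.range (k + 1), Real.sin ((i + 1) * θ) ^ 2 := by
    rw [Finset.mul_sum]
    refine Finset.sum_congr rfl fun i _ => ?_
    rw [bs_trig_chain]; ring
  have e1 : ∑ i ∈ Finset.range (k+1), Real.sin ((i+1)*θ) * Real.sin (i*θ)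
      = ∑ i ∈ Finset.range k, Real.sin ((i + 1) * θ) * Real.sin ((i + 2) * θ) := by
    rw [Finset.sum_range_succ']
    simp only [Nat.cast_zero, zero_mul, Real.sin_zero, mul_zero, add_zero]
    refine Finset.sum_congr rfl fun i _ => ?_
    push_cast; ring_nf
  have e2 : ∑ i ∈ Finset.range (k+1), Real.sin ((i+1)*θ) * Real.sin ((i+2)*θ)
      = ∑ i ∈ Finset.range k, Real.sin ((i + 1) * θ) * Real.sin ((i + 2) * θ) := by
    rw [Finset.sum_range_succ]
    rw [hθ, mul_zero, add_zero]
  have expand : ∑ i ∈ Finset.range (k+1),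
        Real.sin ((i+1)*θ) * (Real.sin (i*θ) + Real.sin ((i+2)*θ))
      = ∑ i ∈ Finset.range (k+1), Real.sin ((i+1)*θ) * Real.sin (i*θ)
        + ∑ i ∈ Finset.range (k+1), Real.sin ((i+1)*θ) * Real.sin ((i+2)*θ) := by
    rw [← Finset.sum_add_distrib]
    refine Finset.sum_congr rfl fun i _ => by ring
  rw [expand, e1, e2] at key
  linarith

private lemma bs_minModulus_le {m n : Type*} [Fintype m] [Fintype n] [DecidableEq n]
    (A : Matrix m n ℂ) (x : EuclideanSpace ℂ n) (hx : ‖x‖ = 1) :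
    minModulus A ≤ ‖Matrix.toEuclideanLin A x‖ := by
  refine csInf_le ⟨0, ?_⟩ ⟨x, hx, rfl⟩
  rintro r ⟨y, hy, rfl⟩; exact norm_nonneg _

private lemma bs_le_numRadius {ι : Type*} [Fintype ι] [DecidableEq ι] (M : Matrix ι ι ℂ)
    (x : EuclideanSpace ℂ ι) (hx : ‖x‖ = 1) :
    ‖(inner ℂ x (Matrix.toEuclideanLin M x) : ℂ)‖ ≤ numRadius M := by
  refine le_csSup ⟨‖LinearMap.toContinuousLinearMap (Matrix.toEuclideanLin M)‖, ?_⟩ ⟨x, hx, rfl⟩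
  rintro r ⟨y, hy, rfl⟩
  calc ‖(inner ℂ y (Matrix.toEuclideanLin M y) : ℂ)‖
      ≤ ‖y‖ * ‖Matrix.toEuclideanLin M y‖ := norm_inner_le_norm _ _
    _ = ‖LinearMap.toContinuousLinearMap (Matrix.toEuclideanLin M) y‖ := by
        rw [hy, one_mul]; simp
    _ ≤ ‖LinearMap.toContinuousLinearMap (Matrix.toEuclideanLin M)‖ * ‖y‖ :=
        (LinearMap.toContinuousLinearMap (Matrix.toEuclideanLin M)).le_opNorm y
    _ = _ := by rw [hy, mul_one]

private lemma bs_numRadius_nonneg {ι : Type*} [Fintype ι] [DecidableEq ι] (M : Matrix ι ι ℂ) :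
    0 ≤ numRadius M := by
  refine Real.sSup_nonneg ?_
  rintro r ⟨x, hx, rfl⟩
  exact norm_nonneg _

private lemma bs_norm_zero {d : ℕ} (hd : d = 0) (y : EuclideanSpace ℂ (Fin d)) : ‖y‖ = 0 := by
  subst hd
  rw [EuclideanSpace.norm_eq]
  simp

private lemma bs_minModulus_empty {a b : ℕ} (A : Matrix (Fin a) (Fin b) ℂ) (hb : b = 0) :
    minModulus A = 0 := by
  have hset : {r : ℝ | ∃ x : EuclideanSpace ℂ (Fin b), ‖x‖ = 1 ∧
      ‖Matrix.toEuclideanLin A x‖ = r} = ∅ := by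
    ext r
    simp only [Set.mem_setOf_eq, Set.mem_empty_iff_false, iff_false, not_exists]
    rintro x ⟨hx, -⟩
    rw [bs_norm_zero hb x] at hx
    exact one_ne_zero hx.symm
  rw [minModulus, hset, Real.sInf_empty]

private lemma bs_minModulus_zerocod {a b : ℕ} (A : Matrix (Fin a) (Fin b) ℂ) (ha : a = 0) :
    minModulus A ≤ 0 := by
  rcases Nat.eq_zero_or_pos b with hb | hb
  · exact le_of_eq (bs_minModulus_empty A hb)
  · have h1 : ‖(EuclideanSpace.single (⟨0, hb⟩ : Fin b) (1 : ℂ) : EuclideanSpace ℂ (Fin b))‖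
        = 1 := by rw [EuclideanSpace.norm_single, norm_one]
    have h2 := bs_minModulus_le A _ h1
    rwa [bs_norm_zero ha] at h2

private lemma bs_chain_exists {k : ℕ} (n : Fin (k + 1) → ℕ)
    (B : ∀ j : Fin k, Matrix (Fin (n j.castSucc)) (Fin (n j.succ)) ℂ)
    (hn : ∀ j, 0 < n j) (m : ℝ) (hm0 : 0 < m)
    (hB : ∀ (j : Fin k) (x : EuclideanSpace ℂ (Fin (n j.succ))), ‖x‖ = 1 →
      m ≤ ‖Matrix.toEuclideanLin (B j) x‖) :
    ∃ v : ∀ j : Fin (k + 1), EuclideanSpace ℂ (Fin (n j)),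
      (∀ j, ‖v j‖ = 1) ∧
      ∀ j : Fin k,
        (inner ℂ (v j.castSucc) (Matrix.toEuclideanLin (B j) (v j.succ)) : ℂ)
          = (‖Matrix.toEuclideanLin (B j) (v j.succ)‖ : ℂ) := by
  set v : ∀ j : Fin (k + 1), EuclideanSpace ℂ (Fin (n j)) :=
    Fin.reverseInduction (motive := fun j => EuclideanSpace ℂ (Fin (n j)))
      (EuclideanSpace.single ⟨0, hn _⟩ 1)
      (fun j x => ‖Matrix.toEuclideanLin (B j) x‖⁻¹ • Matrix.toEuclideanLin (B j) x) with hv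
  have hnorm : ∀ j, ‖v j‖ = 1 := by
    intro j
    induction j using Fin.reverseInduction with
    | last =>
      rw [hv, Fin.reverseInduction_last, EuclideanSpace.norm_single, norm_one]
    | cast j ih =>
      have hw : m ≤ ‖Matrix.toEuclideanLin (B j) (v j.succ)‖ := hB _ _ ih
      have hw0 : ‖Matrix.toEuclideanLin (B j) (v j.succ)‖ ≠ 0 := (hm0.trans_le hw).ne'
      rw [hv, Fin.reverseInduction_castSucc, norm_smul, norm_inv, norm_norm, ← hv]
      exact inv_mul_cancel₀ hw0
  refine ⟨v, hnorm, fun j => ?_⟩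
  set t := ‖Matrix.toEuclideanLin (B j) (v j.succ)‖ with ht
  have hw : m ≤ t := hB _ _ (hnorm _)
  have hw0 : t ≠ 0 := (hm0.trans_le hw).ne'
  have hcs : v j.castSucc
      = t⁻¹ • Matrix.toEuclideanLin (B j) (v j.succ) := by
    rw [hv, Fin.reverseInduction_castSucc, ← hv, ht]
  rw [hcs, RCLike.real_smul_eq_coe_smul (K := ℂ), inner_smul_left, inner_self_eq_norm_sq_to_K,
    RCLike.conj_ofReal, ← ht]
  have h2 : t⁻¹ * t ^ 2 = t := by field_simp [pow_two]
  calc ((t⁻¹ : ℝ) : ℂ) * ((t : ℝ) : ℂ) ^ 2 = ((t⁻¹ * t ^ 2 : ℝ) : ℂ) := by push_cast; ring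
    _ = (t : ℂ) := by rw [h2]

private lemma bs_sum_reorg {ι κ : Type*} [Fintype ι] [Fintype κ] (x : ι → ℂ)
    (D : κ → ι → ι → ℂ) :
    ∑ p, (starRingEnd ℂ) (x p) * ∑ q, (∑ j, D j p q) * x q
      = ∑ j, ∑ p, ∑ q, (starRingEnd ℂ) (x p) * (D j p q * x q) := by
  have h1 : ∀ p : ι, (starRingEnd ℂ) (x p) * ∑ q, (∑ j, D j p q) * x q
      = ∑ j, ∑ q, (starRingEnd ℂ) (x p) * (D j p q * x q) := by
    intro p
    rw [Finset.mul_sum]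
    rw [show (∑ q, (starRingEnd ℂ) (x p) * ((∑ j, D j p q) * x q))
        = ∑ q, ∑ j, (starRingEnd ℂ) (x p) * (D j p q * x q) from
      Finset.sum_congr rfl fun q _ => by rw [Finset.sum_mul, Finset.mul_sum]]
    exact Finset.sum_comm
  rw [Finset.sum_congr rfl fun p _ => h1 p]
  exact Finset.sum_comm

private lemma bs_collapse {k : ℕ} {n : Fin (k + 1) → ℕ}
    (jc js : Fin (k + 1))
    (F : ((j : Fin (k + 1)) × Fin (n j)) → ((j : Fin (k + 1)) × Fin (n j)) → ℂ)
    (hF : ∀ p q, p.1 ≠ jc ∨ q.1 ≠ js → F p q = 0) :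
    ∑ p, ∑ q, F p q = ∑ p2 : Fin (n jc), ∑ q2 : Fin (n js), F ⟨jc, p2⟩ ⟨js, q2⟩ := by
  rw [← Finset.univ_sigma_univ]
  rw [Finset.sum_sigma]
  rw [show (∑ p1 : Fin (k+1), ∑ p2 : Fin (n p1),
        ∑ q ∈ (Finset.univ.sigma fun _ => Finset.univ), F ⟨p1, p2⟩ q)
      = ∑ p1 : Fin (k+1), ∑ p2 : Fin (n p1), ∑ q1 : Fin (k+1), ∑ q2 : Fin (n q1),
        F ⟨p1, p2⟩ ⟨q1, q2⟩ from
    Finset.sum_congr rfl fun p1 _ => Finset.sum_congr rfl fun p2 _ => Finset.sum_sigma _ _ _]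
  rw [Finset.sum_eq_single jc (fun p1 _ hp1 => Finset.sum_eq_zero fun p2 _ =>
      Finset.sum_eq_zero fun q1 _ => Finset.sum_eq_zero fun q2 _ =>
        hF _ _ (Or.inl hp1))
    (fun h => absurd (Finset.mem_univ _) h)]
  rw [Finset.sum_comm]
  rw [Finset.sum_eq_single js (fun q1 _ hq1 => Finset.sum_eq_zero fun p2 _ =>
      Finset.sum_eq_zero fun q2 _ => hF _ _ (Or.inr hq1))
    (fun h => absurd (Finset.mem_univ _) h)]

private lemma bs_inner_eq {k : ℕ} (n : Fin (k + 1) → ℕ)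
    (B : ∀ j : Fin k, Matrix (Fin (n j.castSucc)) (Fin (n j.succ)) ℂ)
    (v : ∀ j : Fin (k + 1), EuclideanSpace ℂ (Fin (n j))) (c : Fin (k + 1) → ℝ) :
    (inner ℂ ((WithLp.equiv 2 (∀ _ : (j : Fin (k + 1)) × Fin (n j), ℂ)).symm
        (fun p => (c p.1 : ℂ) * v p.1 p.2))
      (Matrix.toEuclideanLin (blockShiftMatrix n B)
        ((WithLp.equiv 2 (∀ _ : (j : Fin (k + 1)) × Fin (n j), ℂ)).symm
          (fun p => (c p.1 : ℂ) * v p.1 p.2))) : ℂ)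
    = ∑ j : Fin k, (c j.castSucc : ℂ) * (c j.succ : ℂ) *
        inner ℂ (v j.castSucc) (Matrix.toEuclideanLin (B j) (v j.succ)) := by
  classical
  set x : ((j : Fin (k + 1)) × Fin (n j)) → ℂ := fun p => (c p.1 : ℂ) * v p.1 p.2 with hx
  have step1 : (inner ℂ ((WithLp.equiv 2 (∀ _ : (j : Fin (k + 1)) × Fin (n j), ℂ)).symm x)
      (Matrix.toEuclideanLin (blockShiftMatrix n B)
        ((WithLp.equiv 2 (∀ _ : (j : Fin (k + 1)) × Fin (n j), ℂ)).symm x)) : ℂ)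
      = ∑ p, (starRingEnd ℂ) (x p) * ∑ q, (blockShiftMatrix n B p q) * x q := by
    rw [PiLp.inner_apply]
    refine Finset.sum_congr rfl fun p _ => ?_
    simp only [RCLike.inner_apply, Matrix.toEuclideanLin_apply, WithLp.equiv_symm_apply,
      PiLp.toLp_apply, WithLp.ofLp_toLp, Matrix.mulVec, dotProduct]
    exact mul_comm _ _
  rw [step1]
  simp only [blockShiftMatrix, Matrix.of_apply]
  rw [bs_sum_reorg x (fun j p q =>
    if h : p.1 = j.castSucc ∧ q.1 = j.succ
    then B j (Fin.cast (congrArg n h.1) p.2) (Fin.cast (congrArg n h.2) q.2) else 0)]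
  refine Finset.sum_congr rfl fun j _ => ?_
  rw [bs_collapse j.castSucc j.succ _ ?_]
  · rw [PiLp.inner_apply]
    simp only [RCLike.inner_apply, Matrix.toEuclideanLin_apply, WithLp.equiv_symm_apply,
      PiLp.toLp_apply, WithLp.ofLp_toLp, Matrix.mulVec, dotProduct, hx, Fin.cast_eq_self,
      map_mul, Complex.conj_ofReal, and_self, dite_true, Finset.mul_sum, Finset.sum_mul]
    refine Finset.sum_congr rfl fun i _ => Finset.sum_congr rfl fun l _ => by ring
  · intro p q hpq
    rw [dif_neg, zero_mul, mul_zero]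
    rcases hpq with h | h
    · exact fun hc => h hc.1
    · exact fun hc => h hc.2

private lemma bs_norm_sq {k : ℕ} {n : Fin (k + 1) → ℕ}
    (v : ∀ j : Fin (k + 1), EuclideanSpace ℂ (Fin (n j))) (hv : ∀ j, ‖v j‖ = 1)
    (c : Fin (k + 1) → ℝ) :
    ‖((WithLp.equiv 2 (∀ _ : (j : Fin (k + 1)) × Fin (n j), ℂ)).symm
        (fun p => (c p.1 : ℂ) * v p.1 p.2) : EuclideanSpace ℂ ((j : Fin (k + 1)) × Fin (n j)))‖ ^ 2
      = ∑ p : Fin (k + 1), (c p) ^ 2 := by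
  rw [EuclideanSpace.norm_eq, Real.sq_sqrt (Finset.sum_nonneg fun _ _ => sq_nonneg _)]
  simp only [WithLp.equiv_symm_apply, PiLp.toLp_apply]
  rw [← Finset.univ_sigma_univ, Finset.sum_sigma]
  refine Finset.sum_congr rfl fun p1 _ => ?_
  have h1 : ∑ p2 : Fin (n p1), ‖v p1 p2‖ ^ 2 = 1 := by
    have := hv p1
    rw [EuclideanSpace.norm_eq] at this
    have h2 := congrArg (fun r : ℝ => r ^ 2) this
    simp only at h2
    rwa [Real.sq_sqrt (Finset.sum_nonneg fun _ _ => sq_nonneg _), one_pow] at h2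
  calc ∑ p2 : Fin (n p1), ‖(c p1 : ℂ) * v p1 p2‖ ^ 2
      = ∑ p2 : Fin (n p1), (c p1) ^ 2 * ‖v p1 p2‖ ^ 2 := by
        refine Finset.sum_congr rfl fun p2 _ => ?_
        rw [norm_mul, mul_pow, Complex.norm_real, Real.norm_eq_abs, sq_abs]
    _ = (c p1) ^ 2 := by rw [← Finset.mul_sum, h1, mul_one]

end BlockShiftHelpers

/-- For a block shift `A` with `k+1` blocks and `m = min_j m(A_j)`, one has
`w(A) ≥ m · cos (π / (k + 2))`. -/
theorem min_minModulus_mul_cos_le_numRadius_blockShift {k : ℕ} (hk : 0 < k)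
    (n : Fin (k + 1) → ℕ)
    (B : ∀ j : Fin k, Matrix (Fin (n j.castSucc)) (Fin (n j.succ)) ℂ) (m : ℝ)
    (hm : m = Finset.univ.inf'
      (Finset.univ_nonempty_iff.mpr (Fin.pos_iff_nonempty.mp hk)) fun j => minModulus (B j)) :
    m * Real.cos (Real.pi / (k + 2)) ≤ numRadius (blockShiftMatrix n B) := by
  classical
  set θ : ℝ := Real.pi / ((k : ℝ) + 2) with hθdef
  have hk2 : (0 : ℝ) < (k : ℝ) + 2 := by positivity
  have hθpos : 0 < θ := div_pos Real.pi_pos hk2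
  have hθltpi : θ < Real.pi := by
    rw [hθdef, div_lt_iff₀ hk2]
    nlinarith [Real.pi_pos]
  have hk1 : (1 : ℝ) ≤ (k : ℝ) := by exact_mod_cast hk
  have hθlt2 : θ < Real.pi / 2 := by
    rw [hθdef, div_lt_div_iff₀ hk2 two_pos]
    nlinarith [Real.pi_pos]
  have hcos : 0 < Real.cos θ := Real.cos_pos_of_mem_Ioo ⟨by linarith, hθlt2⟩
  have hsin : Real.sin (((k : ℝ) + 2) * θ) = 0 := by
    rw [hθdef, mul_div_cancel₀ _ hk2.ne', Real.sin_pi]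
  by_cases hm0 : m ≤ 0
  · have h1 : m * Real.cos θ ≤ 0 := mul_nonpos_iff.mpr (Or.inr ⟨hm0, hcos.le⟩)
    exact h1.trans (bs_numRadius_nonneg _)
  push_neg at hm0
  have hmle : ∀ j : Fin k, m ≤ minModulus (B j) := fun j => by
    rw [hm]; exact Finset.inf'_le _ (Finset.mem_univ j)
  have hB : ∀ (j : Fin k) (x : EuclideanSpace ℂ (Fin (n j.succ))), ‖x‖ = 1 →
      m ≤ ‖Matrix.toEuclideanLin (B j) x‖ := fun j x hx =>
    (hmle j).trans (bs_minModulus_le (B j) x hx)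
  have hn : ∀ j, 0 < n j := by
    intro j
    by_contra hj
    have hj0 : n j = 0 := Nat.eq_zero_of_not_pos hj
    by_cases hjk : (j : ℕ) < k
    · have hic : (⟨(j : ℕ), hjk⟩ : Fin k).castSucc = j := Fin.ext rfl
      have h0 : n (⟨(j : ℕ), hjk⟩ : Fin k).castSucc = 0 := by rw [hic]; exact hj0
      have := (hmle _).trans (bs_minModulus_zerocod (B ⟨(j : ℕ), hjk⟩) h0)
      linarith
    · have hjval : (j : ℕ) = k := le_antisymm (Nat.lt_succ_iff.mp j.isLt) (le_of_not_gt hjk)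
      have hik : k - 1 < k := Nat.sub_lt hk one_pos
      have his : (⟨k - 1, hik⟩ : Fin k).succ = j := by
        apply Fin.ext
        simp only [Fin.val_succ, hjval]
        omega
      have hd : n (⟨k - 1, hik⟩ : Fin k).succ = 0 := by rw [his]; exact hj0
      have := (hmle _).trans (le_of_eq (bs_minModulus_empty (B ⟨k - 1, hik⟩) hd))
      linarith
  obtain ⟨v, hv, hvi⟩ := bs_chain_exists n B hn m hm0 hB
  set c : Fin (k + 1) → ℝ := fun p => Real.sin (((p : ℕ) + 1) * θ) with hc
  have hcnn : ∀ p, 0 ≤ c p := by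
    intro p
    simp only [hc]
    refine Real.sin_nonneg_of_nonneg_of_le_pi (by positivity) ?_
    have hp : ((p : ℕ) : ℝ) + 1 ≤ (k : ℝ) + 2 := by
      have h := Nat.lt_succ_iff.mp p.isLt
      have : ((p : ℕ) : ℝ) ≤ (k : ℝ) := by exact_mod_cast h
      linarith
    calc (((p : ℕ) : ℝ) + 1) * θ ≤ ((k : ℝ) + 2) * θ := mul_le_mul_of_nonneg_right hp hθpos.le
      _ = Real.pi := by rw [hθdef]; field_simp
  set s : ℝ := ∑ p : Fin (k + 1), (c p) ^ 2 with hs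
  have hspos : 0 < s := by
    rw [hs]
    refine Finset.sum_pos' (fun p _ => sq_nonneg _) ⟨0, Finset.mem_univ _, ?_⟩
    have h0 : c 0 = Real.sin θ := by simp [hc]
    rw [h0]
    exact pow_pos (Real.sin_pos_of_pos_of_lt_pi hθpos hθltpi) 2
  set a : ℝ := Real.sqrt s⁻¹ with ha
  have ha2 : a ^ 2 = s⁻¹ := Real.sq_sqrt (inv_nonneg.mpr hspos.le)
  set c' : Fin (k + 1) → ℝ := fun p => a * c p with hc'
  set T : ℝ := ∑ j : Fin k,
      c j.castSucc * c j.succ * ‖Matrix.toEuclideanLin (B j) (v j.succ)‖ with hT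
  have hTlb : m * Real.cos θ * s ≤ T := by
    have h1 : ∑ j : Fin k, c j.castSucc * c j.succ * m ≤ T := by
      rw [hT]
      refine Finset.sum_le_sum fun j _ => ?_
      exact mul_le_mul_of_nonneg_left (hB j _ (hv _)) (mul_nonneg (hcnn _) (hcnn _))
    have h3 : ∑ j : Fin k, c j.castSucc * c j.succ = Real.cos θ * s := by
      have h4 : ∀ j : Fin k, c j.castSucc * c j.succ
          = Real.sin (((j : ℕ) + 1) * θ) * Real.sin (((j : ℕ) + 2) * θ) := by
        intro j
        simp only [hc, Fin.coe_castSucc, Fin.val_succ]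
        push_cast
        try ring_nf
      rw [Finset.sum_congr rfl fun j _ => h4 j]
      have h5 : s = ∑ i ∈ Finset.range (k + 1), Real.sin ((i + 1) * θ) ^ 2 := by
        rw [hs, ← Fin.sum_univ_eq_sum_range (fun i => Real.sin (((i : ℕ) + 1) * θ) ^ 2) (k + 1)]
      rw [h5, ← bs_trig_identity k θ hsin,
        ← Fin.sum_univ_eq_sum_range
          (fun i => Real.sin (((i : ℕ) + 1) * θ) * Real.sin (((i : ℕ) + 2) * θ)) k]
    have h2 : ∑ j : Fin k, c j.castSucc * c j.succ * m = m * Real.cos θ * s := by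
      rw [← Finset.sum_mul, h3]; ring
    linarith
  have hTnn : 0 ≤ T :=
    le_trans (mul_nonneg (mul_nonneg hm0.le hcos.le) hspos.le) hTlb
  set X : EuclideanSpace ℂ ((j : Fin (k + 1)) × Fin (n j)) :=
    (WithLp.equiv 2 (∀ _ : (j : Fin (k + 1)) × Fin (n j), ℂ)).symm
      (fun p => (c' p.1 : ℂ) * v p.1 p.2) with hX
  have hsum : ∑ p : Fin (k + 1), c' p ^ 2 = 1 := by
    simp only [hc', mul_pow]
    rw [← Finset.mul_sum, ← hs, ha2]
    exact inv_mul_cancel₀ hspos.ne'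
  have hX2 : ‖X‖ ^ 2 = 1 := by rw [hX, bs_norm_sq v hv c', hsum]
  have hXnorm : ‖X‖ = 1 := by
    calc ‖X‖ = Real.sqrt (‖X‖ ^ 2) := (Real.sqrt_sq (norm_nonneg _)).symm
      _ = 1 := by rw [hX2, Real.sqrt_one]
  have hsumT : ∑ j : Fin k, c' j.castSucc * c' j.succ
      * ‖Matrix.toEuclideanLin (B j) (v j.succ)‖ = s⁻¹ * T := by
    rw [hT, Finset.mul_sum]
    refine Finset.sum_congr rfl fun j _ => ?_
    simp only [hc']
    rw [← ha2]; ring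
  have hIX : (inner ℂ X (Matrix.toEuclideanLin (blockShiftMatrix n B) X) : ℂ)
      = ((s⁻¹ * T : ℝ) : ℂ) := by
    rw [hX, bs_inner_eq n B v c']
    have hterm : ∀ j : Fin k, (c' j.castSucc : ℂ) * (c' j.succ : ℂ) *
        inner ℂ (v j.castSucc) (Matrix.toEuclideanLin (B j) (v j.succ))
        = ((c' j.castSucc * c' j.succ
            * ‖Matrix.toEuclideanLin (B j) (v j.succ)‖ : ℝ) : ℂ) := by
      intro j
      rw [hvi j]
      push_cast
      try ring
    rw [Finset.sum_congr rfl fun j _ => hterm j, ← Complex.ofReal_sum, hsumT]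
  have hval : ‖(inner ℂ X (Matrix.toEuclideanLin (blockShiftMatrix n B) X) : ℂ)‖
      = s⁻¹ * T := by
    rw [hIX, Complex.norm_real, Real.norm_eq_abs, abs_of_nonneg (mul_nonneg (inv_nonneg.mpr hspos.le) hTnn)]
  have hfinal : m * Real.cos θ ≤ s⁻¹ * T := by
    rw [inv_mul_eq_div]
    exact (le_div_iff₀ hspos).mpr hTlb
  calc m * Real.cos θ ≤ s⁻¹ * T := hfinal
    _ = ‖(inner ℂ X (Matrix.toEuclideanLin (blockShiftMatrix n B) X) : ℂ)‖ := hval.symm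
    _ ≤ numRadius (blockShiftMatrix n B) := bs_le_numRadius _ X hXnorm
end

section
/- Let A be the 4×4 complex matrix with rows [0, 1, 1, 0], [0, 0, 0, 1], [0, 0, 0, −1], [0, 0, 0, 0], and let A'' be the 3×3 matrix with (2,3) entry √2 and all other entries zero. Then w(A) = w(A'') = √2/2, but A is not unitarily similar to A'' ⊕ [0] (the direct sum of A'' with the 1×1 zero matrix). -/
open scoped ComplexConjugate

lemma inner_expand_aux {ι : Type*} [Fintype ι] [DecidableEq ι] (M : Matrix ι ι ℂ)
    (x : EuclideanSpace ℂ ι) :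
    (inner ℂ x (Matrix.toEuclideanLin M x) : ℂ) = ∑ i, ∑ j, (starRingEnd ℂ) (x i) * M i j * x j := by
  rw [PiLp.inner_apply]
  refine Finset.sum_congr rfl fun i _ => ?_
  have : (Matrix.toEuclideanLin M) x i = ∑ j, M i j * x j := by
    simp [Matrix.toEuclideanLin_apply, Matrix.mulVec, dotProduct]
  rw [this, RCLike.inner_apply, Finset.sum_mul]
  exact Finset.sum_congr rfl fun j _ => by ring

lemma norm_sq_expand_aux {ι : Type*} [Fintype ι] (x : EuclideanSpace ℂ ι) (h : ‖x‖ = 1) :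
    ∑ i, ‖x i‖ ^ 2 = 1 := by
  have h2 : ‖x‖ ^ 2 = 1 := by rw [h]; norm_num
  rw [EuclideanSpace.norm_eq, Real.sq_sqrt (Finset.sum_nonneg fun i _ => sq_nonneg ‖x i‖)] at h2
  simpa using h2

lemma part1_ub (x : EuclideanSpace ℂ (Fin 4)) (hx : ‖x‖ = 1) :
    ‖(inner ℂ x (Matrix.toEuclideanLin
      (!![0, 1, 1, 0; 0, 0, 0, 1; 0, 0, 0, -1; 0, 0, 0, 0] : Matrix (Fin 4) (Fin 4) ℂ) x) : ℂ)‖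
      ≤ Real.sqrt 2 / 2 := by
  have hs0 : (0:ℝ) ≤ Real.sqrt 2 := Real.sqrt_nonneg 2
  have hs2 : Real.sqrt 2 ^ 2 = 2 := Real.sq_sqrt (by norm_num)
  rw [inner_expand_aux]
  have hv : (∑ i, ∑ j, conj (x i) *
        (!![0, 1, 1, 0; 0, 0, 0, 1; 0, 0, 0, -1; 0, 0, 0, 0] : Matrix (Fin 4) (Fin 4) ℂ) i j * x j)
      = conj (x 0) * (x 1 + x 2) + conj (x 1 - x 2) * x 3 := by
    simp [Fin.sum_univ_four, Matrix.vecHead, Matrix.vecTail]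
    ring
  rw [hv]
  set a := ‖x 0‖
  set b := ‖x 1‖
  set c := ‖x 2‖
  set d := ‖x 3‖
  set s := ‖x 1 + x 2‖
  set t := ‖x 1 - x 2‖
  have htri : ‖conj (x 0) * (x 1 + x 2) + conj (x 1 - x 2) * x 3‖ ≤ a * s + t * d := by
    calc ‖conj (x 0) * (x 1 + x 2) + conj (x 1 - x 2) * x 3‖
        ≤ ‖conj (x 0) * (x 1 + x 2)‖ + ‖conj (x 1 - x 2) * x 3‖ :=
          norm_add_le _ _
      _ = a * s + t * d := by rw [norm_mul, norm_mul, Complex.norm_conj, Complex.norm_conj]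
  have hpar : s ^ 2 + t ^ 2 = 2 * b ^ 2 + 2 * c ^ 2 := by
    simp only [s, t, b, c, Complex.sq_norm, Complex.normSq_apply, Complex.add_re, Complex.add_im,
      Complex.sub_re, Complex.sub_im]
    ring
  have hsum := norm_sq_expand_aux x hx
  rw [Fin.sum_univ_four] at hsum
  have ha : 0 ≤ a := norm_nonneg _
  have hb : 0 ≤ b := norm_nonneg _
  have hc : 0 ≤ c := norm_nonneg _
  have hd : 0 ≤ d := norm_nonneg _
  have hs' : 0 ≤ s := norm_nonneg _
  have ht' : 0 ≤ t := norm_nonneg _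
  have h1 : (a * s + t * d) ^ 2 ≤ 1 / 2 := by
    nlinarith [sq_nonneg (a * t - d * s), sq_nonneg (a ^ 2 + d ^ 2 - b ^ 2 - c ^ 2),
      mul_nonneg ha hs', mul_nonneg ht' hd]
  have h2 : 0 ≤ a * s + t * d := by positivity
  nlinarith [htri, norm_nonneg (conj (x 0) * (x 1 + x 2) + conj (x 1 - x 2) * x 3)]

lemma part2_ub (x : EuclideanSpace ℂ (Fin 3)) (hx : ‖x‖ = 1) :
    ‖(inner ℂ x (Matrix.toEuclideanLin
      (!![0, 0, 0; 0, 0, (Real.sqrt 2 : ℂ); 0, 0, 0]) x) : ℂ)‖ ≤ Real.sqrt 2 / 2 := by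
  have hs0 : (0:ℝ) ≤ Real.sqrt 2 := Real.sqrt_nonneg 2
  have hs2 : Real.sqrt 2 ^ 2 = 2 := Real.sq_sqrt (by norm_num)
  rw [inner_expand_aux]
  have hv : (∑ i, ∑ j, conj (x i) * (!![0, 0, 0; 0, 0, (Real.sqrt 2 : ℂ); 0, 0, 0]) i j * x j)
      = conj (x 1) * (Real.sqrt 2 : ℂ) * x 2 := by
    simp [Fin.sum_univ_three]
  rw [hv]
  have hsum := norm_sq_expand_aux x hx
  rw [Fin.sum_univ_three] at hsum
  have habs : ‖conj (x 1) * (Real.sqrt 2 : ℂ) * x 2‖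
      = ‖x 1‖ * Real.sqrt 2 * ‖x 2‖ := by
    simp [norm_mul, Complex.norm_conj, Complex.norm_real, abs_of_nonneg hs0]
  rw [habs]
  nlinarith [sq_nonneg (‖x 1‖ - ‖x 2‖), norm_nonneg (x 0),
    norm_nonneg (x 1), norm_nonneg (x 2), sq_nonneg (‖x 0‖)]

/-- The 4×4 matrix with rows `[0,1,1,0], [0,0,0,1], [0,0,0,-1], [0,0,0,0]`
and the 3×3 matrix with single nonzero entry `√2` at position `(2,3)` both have numerical
radius `√2/2`, yet the 4×4 matrix is not unitarily similar to the direct sum of the 3×3 one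
and a 1×1 zero. -/
theorem example_lower_bound_equality_without_direct_summand :
    numRadius (!![0, 1, 1, 0;
                  0, 0, 0, 1;
                  0, 0, 0, -1;
                  0, 0, 0, 0] : Matrix (Fin 4) (Fin 4) ℂ) = Real.sqrt 2 / 2 ∧
    numRadius (!![0, 0, 0;
                  0, 0, (Real.sqrt 2 : ℂ);
                  0, 0, 0]) = Real.sqrt 2 / 2 ∧
    ¬ UnitarilySimilar
        (!![0, 1, 1, 0;
            0, 0, 0, 1;
            0, 0, 0, -1;
            0, 0, 0, 0] : Matrix (Fin 4) (Fin 4) ℂ)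
        (Matrix.fromBlocks
          (!![0, 0, 0;
              0, 0, (Real.sqrt 2 : ℂ);
              0, 0, 0]) 0 0 (0 : Matrix (Fin 1) (Fin 1) ℂ)) := by
  have hs0 : (0:ℝ) ≤ Real.sqrt 2 := Real.sqrt_nonneg 2
  have hs2 : Real.sqrt 2 ^ 2 = 2 := Real.sq_sqrt (by norm_num)
  refine ⟨?_, ?_, ?_⟩
  · -- numerical radius of the 4×4 matrix
    apply le_antisymm
    · apply Real.sSup_le
      · rintro r ⟨x, hx, rfl⟩
        exact part1_ub x hx
      · positivity
    · apply le_csSup ⟨Real.sqrt 2 / 2, by rintro r ⟨x, hx, rfl⟩; exact part1_ub x hx⟩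
      set c : ℂ := ((Real.sqrt 2 / 2 : ℝ) : ℂ) with hcd
      set h : ℂ := ((1 / 2 : ℝ) : ℂ) with hhd
      refine ⟨(WithLp.equiv 2 (Fin 4 → ℂ)).symm ![c, h, h, 0], ?_, ?_⟩
      · rw [EuclideanSpace.norm_eq]
        have e0 : ((WithLp.equiv 2 (Fin 4 → ℂ)).symm ![c, h, h, 0]) 0 = c := rfl
        have e1 : ((WithLp.equiv 2 (Fin 4 → ℂ)).symm ![c, h, h, 0]) 1 = h := rfl
        have e2 : ((WithLp.equiv 2 (Fin 4 → ℂ)).symm ![c, h, h, 0]) 2 = h := rfl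
        have e3 : ((WithLp.equiv 2 (Fin 4 → ℂ)).symm ![c, h, h, 0]) 3 = 0 := rfl
        have hnc : ‖c‖ = Real.sqrt 2 / 2 := by
          rw [hcd, Complex.norm_real, Real.norm_of_nonneg (by positivity)]
        have hnh : ‖h‖ = 1 / 2 := by
          rw [hhd, Complex.norm_real, Real.norm_of_nonneg (by positivity)]
        rw [Fin.sum_univ_four, e0, e1, e2, e3, hnc, hnh, norm_zero]
        rw [show (Real.sqrt 2/2)^2 + (1/2:ℝ)^2 + (1/2:ℝ)^2 + (0:ℝ)^2 = 1 by nlinarith]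
        exact Real.sqrt_one
      · rw [inner_expand_aux]
        have e0 : ((WithLp.equiv 2 (Fin 4 → ℂ)).symm ![c, h, h, 0]) 0 = c := rfl
        have e1 : ((WithLp.equiv 2 (Fin 4 → ℂ)).symm ![c, h, h, 0]) 1 = h := rfl
        have e2 : ((WithLp.equiv 2 (Fin 4 → ℂ)).symm ![c, h, h, 0]) 2 = h := rfl
        have e3 : ((WithLp.equiv 2 (Fin 4 → ℂ)).symm ![c, h, h, 0]) 3 = 0 := rfl
        have hv : (∑ i, ∑ j, conj (((WithLp.equiv 2 (Fin 4 → ℂ)).symm ![c, h, h, 0]) i) *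
              (!![0, 1, 1, 0; 0, 0, 0, 1; 0, 0, 0, -1; 0, 0, 0, 0] : Matrix (Fin 4) (Fin 4) ℂ) i j *
              (((WithLp.equiv 2 (Fin 4 → ℂ)).symm ![c, h, h, 0]) j))
            = conj c * (h + h) := by
          simp only [Fin.sum_univ_four, e0, e1, e2, e3]
          simp [Matrix.vecHead, Matrix.vecTail]
          ring
        rw [hv, hcd, hhd, Complex.conj_ofReal]
        rw [show ((Real.sqrt 2 / 2 : ℝ) : ℂ) * (((1/2 : ℝ) : ℂ) + ((1/2 : ℝ) : ℂ))
            = ((Real.sqrt 2 / 2 : ℝ) : ℂ) by push_cast; ring]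
        rw [Complex.norm_real, Real.norm_of_nonneg (by positivity)]
  · -- numerical radius of the 3×3 matrix
    apply le_antisymm
    · apply Real.sSup_le
      · rintro r ⟨x, hx, rfl⟩
        exact part2_ub x hx
      · positivity
    · apply le_csSup ⟨Real.sqrt 2 / 2, by rintro r ⟨x, hx, rfl⟩; exact part2_ub x hx⟩
      set c : ℂ := ((Real.sqrt 2 / 2 : ℝ) : ℂ) with hcd
      refine ⟨(WithLp.equiv 2 (Fin 3 → ℂ)).symm ![0, c, c], ?_, ?_⟩
      · rw [EuclideanSpace.norm_eq]
        have e0 : ((WithLp.equiv 2 (Fin 3 → ℂ)).symm ![0, c, c]) 0 = 0 := rfl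
        have e1 : ((WithLp.equiv 2 (Fin 3 → ℂ)).symm ![0, c, c]) 1 = c := rfl
        have e2 : ((WithLp.equiv 2 (Fin 3 → ℂ)).symm ![0, c, c]) 2 = c := rfl
        have hnc : ‖c‖ = Real.sqrt 2 / 2 := by
          rw [hcd, Complex.norm_real, Real.norm_of_nonneg (by positivity)]
        rw [Fin.sum_univ_three, e0, e1, e2, hnc, norm_zero]
        rw [show (0:ℝ)^2 + (Real.sqrt 2/2)^2 + (Real.sqrt 2/2)^2 = 1 by nlinarith]
        exact Real.sqrt_one
      · rw [inner_expand_aux]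
        have e1 : ((WithLp.equiv 2 (Fin 3 → ℂ)).symm ![0, c, c]) 1 = c := rfl
        have e2 : ((WithLp.equiv 2 (Fin 3 → ℂ)).symm ![0, c, c]) 2 = c := rfl
        have hv : (∑ i, ∑ j, conj (((WithLp.equiv 2 (Fin 3 → ℂ)).symm ![0, c, c]) i) *
              (!![0, 0, 0; 0, 0, (Real.sqrt 2 : ℂ); 0, 0, 0]) i j *
              (((WithLp.equiv 2 (Fin 3 → ℂ)).symm ![0, c, c]) j))
            = conj c * (Real.sqrt 2 : ℂ) * c := by
          simp [Fin.sum_univ_three, e1, e2]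
        rw [hv, hcd, Complex.conj_ofReal]
        rw [show ((Real.sqrt 2 / 2 : ℝ) : ℂ) * (Real.sqrt 2 : ℂ) * ((Real.sqrt 2 / 2 : ℝ) : ℂ)
            = ((Real.sqrt 2 ^ 3 / 4 : ℝ) : ℂ) by push_cast; ring]
        rw [Complex.norm_real, Real.norm_of_nonneg (by positivity)]
        nlinarith
  · -- not unitarily similar
    rintro ⟨U, hU⟩
    set A : Matrix (Fin 4) (Fin 4) ℂ := !![0, 1, 1, 0; 0, 0, 0, 1; 0, 0, 0, -1; 0, 0, 0, 0] with hA
    set B : Matrix (Fin 3 ⊕ Fin 1) (Fin 3 ⊕ Fin 1) ℂ := Matrix.fromBlocks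
            (!![0, 0, 0; 0, 0, (Real.sqrt 2 : ℂ); 0, 0, 0]) 0 0 0 with hB
    set w : EuclideanSpace ℂ (Fin 3 ⊕ Fin 1) := EuclideanSpace.single (Sum.inl 1) (1:ℂ) with hw
    have hBy : ∀ y : EuclideanSpace ℂ (Fin 3 ⊕ Fin 1),
        Matrix.toEuclideanLin B y = ((Real.sqrt 2 : ℂ) * y (Sum.inl 2)) • w := by
      intro y
      ext i
      have : (Matrix.toEuclideanLin B y) i = ∑ j, B i j * y j := by
        simp [Matrix.toEuclideanLin_apply, Matrix.mulVec, dotProduct]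
      rw [this]
      have hsm : (((Real.sqrt 2 : ℂ) * y (Sum.inl 2)) • w) i
          = ((Real.sqrt 2 : ℂ) * y (Sum.inl 2)) * w i := rfl
      rw [hsm, hw]
      rcases i with k | k <;> fin_cases k <;>
        simp [hB, Fintype.sum_sum_type, Fin.sum_univ_three, Fin.sum_univ_one,
          EuclideanSpace.single_apply, Matrix.fromBlocks]
    set e1 : EuclideanSpace ℂ (Fin 4) := EuclideanSpace.single (1 : Fin 4) (1:ℂ) with he1
    set e3 : EuclideanSpace ℂ (Fin 4) := EuclideanSpace.single (3 : Fin 4) (1:ℂ) with he3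
    set v : EuclideanSpace ℂ (Fin 4) := U.symm w with hv
    have key : ∀ x : EuclideanSpace ℂ (Fin 4),
        Matrix.toEuclideanLin A x = ((Real.sqrt 2 : ℂ) * (U x) (Sum.inl 2)) • v := by
      intro x
      have h := hU x
      rw [hBy] at h
      have := congrArg U.symm h
      rw [U.symm_apply_apply, map_smul] at this
      exact this
    have hfe : ∀ (x : EuclideanSpace ℂ (Fin 4)) (i : Fin 4),
        (Matrix.toEuclideanLin A x) i = ∑ j, A i j * x j := by
      intro x i
      simp [Matrix.toEuclideanLin_apply, Matrix.mulVec, dotProduct]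
    have hsmul : ∀ (c : ℂ) (i : Fin 4), ((c • v) i) = c * v i := fun c i => rfl
    set c1 : ℂ := (Real.sqrt 2 : ℂ) * (U e1) (Sum.inl 2) with hc1
    set c3 : ℂ := (Real.sqrt 2 : ℂ) * (U e3) (Sum.inl 2) with hc3
    have k10 : c1 * v 0 = 1 := by
      have := congr_fun (congrArg WithLp.ofLp (key e1)) (0 : Fin 4)
      rw [hsmul] at this
      rw [← this, hfe]
      simp [hA, Fin.sum_univ_four, he1, EuclideanSpace.single_apply]
    have k11 : c1 * v 1 = 0 := by
      have := congr_fun (congrArg WithLp.ofLp (key e1)) (1 : Fin 4)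
      rw [hsmul] at this
      rw [← this, hfe]
      simp [hA, Fin.sum_univ_four, he1, EuclideanSpace.single_apply]
    have k31 : c3 * v 1 = 1 := by
      have := congr_fun (congrArg WithLp.ofLp (key e3)) (1 : Fin 4)
      rw [hsmul] at this
      rw [← this, hfe]
      simp [hA, Fin.sum_univ_four, he3, EuclideanSpace.single_apply]
    have hc1ne : c1 ≠ 0 := fun h => by simp [h] at k10
    have hv1 : v 1 = 0 := by
      rcases mul_eq_zero.mp k11 with h | h
      · exact absurd h hc1ne
      · exact h
    rw [hv1, mul_zero] at k31
    exact zero_ne_one k31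
end

section
/- Let A_1 be an n_1×n_2 complex matrix, let A be the (n_1+n_2)×(n_1+n_2) block matrix [[0, A_1], [0, 0]], and let A''' be the 2×2 matrix [[0, γ(A_1)], [0, 0]], where γ(A_1) is the reduced minimum modulus of A_1. Then w(A) = w(A''') if and only if A is unitarily similar to a direct sum A''' ⊕ ⋯ ⊕ A''' ⊕ 0, consisting of finitely many copies of A''' together with a zero matrix. -/
open Classical in
/-- The reduced minimum modulus `γ(A) = min {‖Ax‖ : ‖x‖ = 1, x ⊥ ker A}` for `A ≠ 0`,
and `γ(0) = 0`. -/
noncomputable def reducedMinModulus {m n : Type*} [Fintype m] [Fintype n] [DecidableEq n]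
    (A : Matrix m n ℂ) : ℝ :=
  if A = 0 then 0 else
    sInf {r : ℝ | ∃ x : EuclideanSpace ℂ n, ‖x‖ = 1 ∧
      x ∈ (LinearMap.ker (Matrix.toEuclideanLin A))ᗮ ∧ ‖Matrix.toEuclideanLin A x‖ = r}

open scoped InnerProductSpace
open Matrix

set_option linter.unusedSectionVars false
noncomputable section Aux

variable {ι κ : Type*} [Fintype ι] [Fintype κ] [DecidableEq ι] [DecidableEq κ]

/-- Glue two Euclidean vectors into a sum-indexed Euclidean vector. -/
def glue (u : EuclideanSpace ℂ ι) (v : EuclideanSpace ℂ κ) : EuclideanSpace ℂ (ι ⊕ κ) :=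
  (WithLp.equiv 2 _).symm (Sum.elim ((WithLp.equiv 2 _) u) ((WithLp.equiv 2 _) v))

/-- Right component. -/
def rightE (x : EuclideanSpace ℂ (ι ⊕ κ)) : EuclideanSpace ℂ κ :=
  (WithLp.equiv 2 _).symm (fun k => (WithLp.equiv 2 _) x (Sum.inr k))

def leftE (x : EuclideanSpace ℂ (ι ⊕ κ)) : EuclideanSpace ℂ ι :=
  (WithLp.equiv 2 _).symm (fun k => (WithLp.equiv 2 _) x (Sum.inl k))

@[simp] lemma glue_inl (u : EuclideanSpace ℂ ι) (v : EuclideanSpace ℂ κ) (i : ι) :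
    glue u v (Sum.inl i) = u i := rfl

@[simp] lemma glue_inr (u : EuclideanSpace ℂ ι) (v : EuclideanSpace ℂ κ) (k : κ) :
    glue u v (Sum.inr k) = v k := rfl

@[simp] lemma rightE_apply (x : EuclideanSpace ℂ (ι ⊕ κ)) (k : κ) :
    rightE x k = x (Sum.inr k) := rfl

@[simp] lemma leftE_apply (x : EuclideanSpace ℂ (ι ⊕ κ)) (i : ι) :
    leftE x i = x (Sum.inl i) := rfl

lemma glue_leftE_rightE (x : EuclideanSpace ℂ (ι ⊕ κ)) : glue (leftE x) (rightE x) = x := by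
  ext j; cases j <;> rfl

@[simp] lemma glue_zero_zero : (glue 0 0 : EuclideanSpace ℂ (ι ⊕ κ)) = 0 := by
  ext j; cases j <;> rfl

lemma glue_smul (c : ℂ) (u : EuclideanSpace ℂ ι) (v : EuclideanSpace ℂ κ) :
    glue (c • u) (c • v) = c • glue u v := by
  ext j; cases j <;> rfl

lemma inner_glue (u u' : EuclideanSpace ℂ ι) (v v' : EuclideanSpace ℂ κ) :
    (inner ℂ (glue u v) (glue u' v') : ℂ) = inner ℂ u u' + inner ℂ v v' := by
  simp [PiLp.inner_apply, Fintype.sum_sum_type]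

lemma norm_glue_sq (u : EuclideanSpace ℂ ι) (v : EuclideanSpace ℂ κ) :
    ‖glue u v‖ ^ 2 = ‖u‖ ^ 2 + ‖v‖ ^ 2 := by
  have h := inner_glue u u v v
  have h1 := inner_self_eq_norm_sq (𝕜 := ℂ) (glue u v)
  have h2 := inner_self_eq_norm_sq (𝕜 := ℂ) u
  have h3 := inner_self_eq_norm_sq (𝕜 := ℂ) v
  rw [← h1, ← h2, ← h3, h, map_add]

lemma toEuclideanLin_fromBlocks (A₁ : Matrix ι κ ℂ) (x : EuclideanSpace ℂ (ι ⊕ κ)) :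
    Matrix.toEuclideanLin (fromBlocks (0 : Matrix ι ι ℂ) A₁ 0 0) x
      = glue (Matrix.toEuclideanLin A₁ (rightE x)) (0 : EuclideanSpace ℂ κ) := by
  ext j
  cases j with
  | inl i =>
      simp [Matrix.toEuclideanLin_apply, Matrix.fromBlocks_mulVec]
      rfl
  | inr k =>
      simp [Matrix.toEuclideanLin_apply, Matrix.fromBlocks_mulVec]


@[simp] lemma leftE_glue (u : EuclideanSpace ℂ ι) (v : EuclideanSpace ℂ κ) : leftE (glue u v) = u := by
  ext i; rfl

@[simp] lemma rightE_glue (u : EuclideanSpace ℂ ι) (v : EuclideanSpace ℂ κ) : rightE (glue u v) = v := by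
  ext k; rfl

end Aux

section NumRad
variable {ι κ : Type*} [Fintype ι] [Fintype κ] [DecidableEq ι] [DecidableEq κ]

lemma numRadius_nonneg (M : Matrix ι ι ℂ) : 0 ≤ numRadius M := by
  apply Real.sSup_nonneg
  rintro r ⟨x, hx, rfl⟩
  positivity

lemma numRadius_zero : numRadius (0 : Matrix ι ι ℂ) = 0 := by
  refine le_antisymm (Real.sSup_le ?_ le_rfl) (numRadius_nonneg 0)
  rintro r ⟨x, hx, rfl⟩
  simp

lemma inner_fromBlocks (A₁ : Matrix ι κ ℂ) (x : EuclideanSpace ℂ (ι ⊕ κ)) :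
    (inner ℂ x (Matrix.toEuclideanLin (fromBlocks (0 : Matrix ι ι ℂ) A₁ 0 0) x) : ℂ)
      = inner ℂ (leftE x) (Matrix.toEuclideanLin A₁ (rightE x)) := by
  conv_lhs => rw [toEuclideanLin_fromBlocks, ← glue_leftE_rightE x]
  rw [inner_glue]
  simp

lemma fromBlocks_bound (A₁ : Matrix ι κ ℂ) :
    ∀ r ∈ {r : ℝ | ∃ x : EuclideanSpace ℂ (ι ⊕ κ), ‖x‖ = 1 ∧
      ‖(inner ℂ x (Matrix.toEuclideanLin
        (fromBlocks (0 : Matrix ι ι ℂ) A₁ 0 0) x) : ℂ)‖ = r},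
      r ≤ ‖LinearMap.toContinuousLinearMap (Matrix.toEuclideanLin A₁)‖ / 2 := by
  set Tc := LinearMap.toContinuousLinearMap (Matrix.toEuclideanLin A₁) with hTc
  rintro r ⟨x, hx, rfl⟩
  rw [inner_fromBlocks]
  have h1 : ‖(inner ℂ (leftE x) (Matrix.toEuclideanLin A₁ (rightE x)) : ℂ)‖
      ≤ ‖leftE x‖ * ‖Matrix.toEuclideanLin A₁ (rightE x)‖ := by
    exact norm_inner_le_norm _ _
  have h2 : ‖Matrix.toEuclideanLin A₁ (rightE x)‖ ≤ ‖Tc‖ * ‖rightE x‖ := by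
    have := Tc.le_opNorm (rightE x)
    simpa [hTc] using this
  have h3 : ‖leftE x‖ ^ 2 + ‖rightE x‖ ^ 2 = 1 := by
    rw [← norm_glue_sq, glue_leftE_rightE, hx]; norm_num
  have h0 : (0:ℝ) ≤ ‖Tc‖ := norm_nonneg _
  nlinarith [norm_nonneg (leftE x), norm_nonneg (rightE x),
    mul_le_mul_of_nonneg_left h2 (norm_nonneg (leftE x)), h1,
    sq_nonneg (‖leftE x‖ - ‖rightE x‖)]

lemma norm_aux : ‖(((Real.sqrt 2)⁻¹ : ℝ) : ℂ)‖ ^ 2 = 1 / 2 := by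
  rw [Complex.norm_real, Real.norm_eq_abs, abs_of_nonneg (by positivity),
    inv_pow, Real.sq_sqrt (by norm_num : (0:ℝ) ≤ 2)]
  norm_num

lemma sq_aux : ((((Real.sqrt 2)⁻¹ : ℝ) : ℂ)) * ((((Real.sqrt 2)⁻¹ : ℝ) : ℂ)) = (((1:ℝ)/2 : ℝ) : ℂ) := by
  have h2 : ((Real.sqrt 2 : ℝ) : ℂ) ^ 2 = 2 := by
    norm_cast
    exact Real.sq_sqrt (by norm_num)
  push_cast
  rw [← sq, inv_pow, h2]
  norm_num

lemma half_mem (A₁ : Matrix ι κ ℂ) (u : EuclideanSpace ℂ ι) (v : EuclideanSpace ℂ κ)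
    (s : ℝ) (hu : ‖u‖ = 1) (hv : ‖v‖ = 1) (hs : 0 ≤ s)
    (huv : (inner ℂ u (Matrix.toEuclideanLin A₁ v) : ℂ) = ((s : ℝ) : ℂ)) :
    s / 2 ∈ {r : ℝ | ∃ x : EuclideanSpace ℂ (ι ⊕ κ), ‖x‖ = 1 ∧
      ‖(inner ℂ x (Matrix.toEuclideanLin
        (fromBlocks (0 : Matrix ι ι ℂ) A₁ 0 0) x) : ℂ)‖ = r} := by
  refine ⟨glue ((((Real.sqrt 2)⁻¹ : ℝ) : ℂ) • u) ((((Real.sqrt 2)⁻¹ : ℝ) : ℂ) • v), ?_, ?_⟩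
  · have hsq : ‖glue ((((Real.sqrt 2)⁻¹ : ℝ) : ℂ) • u) ((((Real.sqrt 2)⁻¹ : ℝ) : ℂ) • v)‖ ^ 2 = 1 := by
      rw [norm_glue_sq, norm_smul, norm_smul, mul_pow, mul_pow, norm_aux, hu, hv]
      norm_num
    nlinarith [norm_nonneg (glue ((((Real.sqrt 2)⁻¹ : ℝ) : ℂ) • u) ((((Real.sqrt 2)⁻¹ : ℝ) : ℂ) • v))]
  · rw [inner_fromBlocks, leftE_glue, rightE_glue, _root_.map_smul,
      inner_smul_left, inner_smul_right, huv, Complex.conj_ofReal, ← mul_assoc, sq_aux]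
    rw [show ((((1:ℝ)/2 : ℝ)) : ℂ) * ((s : ℝ) : ℂ) = (((s/2 : ℝ)) : ℂ) by push_cast; ring]
    rw [Complex.norm_real, Real.norm_eq_abs, abs_of_nonneg (by positivity)]

lemma numRadius_fromBlocks (A₁ : Matrix ι κ ℂ) :
    numRadius (fromBlocks (0 : Matrix ι ι ℂ) A₁ 0 0)
      = ‖LinearMap.toContinuousLinearMap (Matrix.toEuclideanLin A₁)‖ / 2 := by
  set Tc := LinearMap.toContinuousLinearMap (Matrix.toEuclideanLin A₁) with hTc
  refine le_antisymm (Real.sSup_le (fromBlocks_bound A₁) (by positivity)) ?_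
  rcases eq_or_lt_of_le (norm_nonneg Tc) with h0 | h0
  · rw [← h0]
    simpa using numRadius_nonneg (fromBlocks (0 : Matrix ι ι ℂ) A₁ 0 0)
  · refine le_of_forall_lt fun c hc => ?_
    rcases lt_or_ge c 0 with hc0 | hc0
    · exact lt_of_lt_of_le hc0 (numRadius_nonneg _)
    have h2c : 2 * c < ‖Tc‖ := by
      rw [lt_div_iff₀ (by norm_num)] at hc; linarith
    obtain ⟨v0, hv0, hv0c⟩ := Tc.exists_lt_apply_of_lt_opNorm h2c
    have hv0ne : v0 ≠ 0 := by
      intro h; rw [h] at hv0c; simp at hv0c; linarith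
    have hnv0 : (0:ℝ) < ‖v0‖ := norm_pos_iff.mpr hv0ne
    set v : EuclideanSpace ℂ κ := ((‖v0‖:ℂ))⁻¹ • v0 with hv
    have hvnorm : ‖v‖ = 1 := by
      rw [hv, norm_smul]
      simp [norm_inv, hnv0.ne']
    have hinv1 : 1 ≤ ‖v0‖⁻¹ := by
      rw [le_inv_comm₀ one_pos hnv0]
      simpa using hv0.le
    have hTv : 2 * c < ‖Tc v‖ := by
      rw [hv, _root_.map_smul, norm_smul]
      have ha : ‖((‖v0‖:ℂ))⁻¹‖ = ‖v0‖⁻¹ := by simp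
      rw [ha]
      calc 2 * c < ‖Tc v0‖ := hv0c
        _ = 1 * ‖Tc v0‖ := (one_mul _).symm
        _ ≤ ‖v0‖⁻¹ * ‖Tc v0‖ := by gcongr
    have ht : 0 < ‖Tc v‖ := lt_of_le_of_lt (by positivity) hTv
    have hTcv : Matrix.toEuclideanLin A₁ v = Tc v := rfl
    have hunorm : ‖((‖Tc v‖⁻¹ : ℝ) : ℂ) • Tc v‖ = 1 := by
      rw [norm_smul, Complex.norm_real, Real.norm_eq_abs, abs_of_pos (inv_pos.mpr ht),
        inv_mul_cancel₀ ht.ne']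
    have hinner : (inner ℂ (((‖Tc v‖⁻¹ : ℝ) : ℂ) • Tc v) (Matrix.toEuclideanLin A₁ v) : ℂ)
        = ((‖Tc v‖ : ℝ) : ℂ) := by
      rw [hTcv, inner_smul_left, Complex.conj_ofReal, inner_self_eq_norm_sq_to_K]
      have htne : ((‖Tc v‖ : ℝ) : ℂ) ≠ 0 := Complex.ofReal_ne_zero.mpr ht.ne'
      rw [pow_two, ← mul_assoc, Complex.ofReal_inv]
      simp [ht.ne']
    have hmem := half_mem A₁ _ _ ‖Tc v‖ hunorm hvnorm (norm_nonneg _) hinner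
    have hbdd : BddAbove {r : ℝ | ∃ x : EuclideanSpace ℂ (ι ⊕ κ), ‖x‖ = 1 ∧
        ‖(inner ℂ x (Matrix.toEuclideanLin
          (fromBlocks (0 : Matrix ι ι ℂ) A₁ 0 0) x) : ℂ)‖ = r} :=
      ⟨‖Tc‖ / 2, fromBlocks_bound A₁⟩
    calc c < ‖Tc v‖ / 2 := by linarith
      _ ≤ _ := le_csSup hbdd hmem

end NumRad

section P3
variable {ι κ : Type*} [Fintype ι] [Fintype κ] [DecidableEq ι] [DecidableEq κ]

lemma rmm_nonneg {m n : Type*} [Fintype m] [Fintype n] [DecidableEq n]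
    (A : Matrix m n ℂ) : 0 ≤ reducedMinModulus A := by
  unfold reducedMinModulus
  split_ifs
  · exact le_rfl
  · apply Real.sInf_nonneg
    rintro r ⟨x, _, _, rfl⟩
    positivity

lemma rmm_zero {m n : Type*} [Fintype m] [Fintype n] [DecidableEq n] :
    reducedMinModulus (0 : Matrix m n ℂ) = 0 := by
  unfold reducedMinModulus
  simp

lemma rmm_le {m n : Type*} [Fintype m] [Fintype n] [DecidableEq n]
    (A : Matrix m n ℂ) (hA : A ≠ 0) (x : EuclideanSpace ℂ n) (hx : ‖x‖ = 1)
    (hmem : x ∈ (LinearMap.ker (Matrix.toEuclideanLin A))ᗮ) :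
    reducedMinModulus A ≤ ‖Matrix.toEuclideanLin A x‖ := by
  unfold reducedMinModulus
  rw [if_neg hA]
  refine csInf_le ⟨0, ?_⟩ ⟨x, hx, hmem, rfl⟩
  rintro r ⟨y, _, _, rfl⟩
  positivity

lemma numRadius_unitarilySimilar {A : Matrix ι ι ℂ} {B : Matrix κ κ ℂ}
    (h : UnitarilySimilar A B) : numRadius A = numRadius B := by
  obtain ⟨U, hU⟩ := h
  unfold numRadius
  congr 1
  ext r
  constructor
  · rintro ⟨x, hx, rfl⟩
    refine ⟨U x, by simp [hx], ?_⟩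
    rw [← hU x, LinearIsometryEquiv.inner_map_map]
  · rintro ⟨y, hy, rfl⟩
    refine ⟨U.symm y, by simp [hy], ?_⟩
    rw [← LinearIsometryEquiv.inner_map_map U, hU, U.apply_symm_apply]

lemma sum_norm_sq_eq (x : EuclideanSpace ℂ ι) : ∑ i, ‖x i‖ ^ 2 = ‖x‖ ^ 2 := by
  rw [EuclideanSpace.norm_eq]
  rw [Real.sq_sqrt]
  positivity

-- the 2×2 case
lemma inner_two (c : ℝ) (x : EuclideanSpace ℂ (Fin 2)) :
    (inner ℂ x (Matrix.toEuclideanLin !![0, (c:ℂ); 0, 0] x) : ℂ)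
      = (starRingEnd ℂ) (x 0) * ((c:ℂ) * x 1) := by
  simp [Matrix.toEuclideanLin_apply, PiLp.inner_apply, RCLike.inner_apply,
    Fin.sum_univ_two, Matrix.mulVec, dotProduct]
  ring

lemma numRadius_two (c : ℝ) (hc : 0 ≤ c) : numRadius !![0, (c:ℂ); 0, 0] = c / 2 := by
  have hub : ∀ r ∈ {r : ℝ | ∃ x : EuclideanSpace ℂ (Fin 2), ‖x‖ = 1 ∧
      ‖(inner ℂ x (Matrix.toEuclideanLin !![0, (c:ℂ); 0, 0] x) : ℂ)‖ = r}, r ≤ c / 2 := by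
    rintro r ⟨x, hx, rfl⟩
    rw [inner_two]
    have hsum : ‖x 0‖ ^ 2 + ‖x 1‖ ^ 2 = 1 := by
      have := sum_norm_sq_eq x
      rw [hx] at this
      simpa [Fin.sum_univ_two] using this
    have : ‖(starRingEnd ℂ) (x 0) * ((c:ℂ) * x 1)‖ = c * (‖x 0‖ * ‖x 1‖) := by
      rw [norm_mul, norm_mul]
      simp [Complex.norm_conj, abs_of_nonneg hc]
      ring
    rw [this]
    nlinarith [norm_nonneg (x 0), norm_nonneg (x 1), sq_nonneg (‖x 0‖ - ‖x 1‖)]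
  refine le_antisymm (Real.sSup_le hub (by positivity)) ?_
  have hmem : c / 2 ∈ {r : ℝ | ∃ x : EuclideanSpace ℂ (Fin 2), ‖x‖ = 1 ∧
      ‖(inner ℂ x (Matrix.toEuclideanLin !![0, (c:ℂ); 0, 0] x) : ℂ)‖ = r} := by
    refine ⟨(WithLp.equiv 2 (Fin 2 → ℂ)).symm ![(((Real.sqrt 2)⁻¹ : ℝ) : ℂ), (((Real.sqrt 2)⁻¹ : ℝ) : ℂ)], ?_, ?_⟩
    · rw [EuclideanSpace.norm_eq]
      have h0 : ∀ i : Fin 2, ‖((WithLp.equiv 2 (Fin 2 → ℂ)).symm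
          ![(((Real.sqrt 2)⁻¹ : ℝ) : ℂ), (((Real.sqrt 2)⁻¹ : ℝ) : ℂ)]) i‖ ^ 2 = 1/2 := by
        intro i
        fin_cases i <;> simpa using norm_aux
      rw [Fin.sum_univ_two, h0 0, h0 1]
      norm_num
    · rw [inner_two]
      have e0 : ((WithLp.equiv 2 (Fin 2 → ℂ)).symm
          ![(((Real.sqrt 2)⁻¹ : ℝ) : ℂ), (((Real.sqrt 2)⁻¹ : ℝ) : ℂ)]) 0 = (((Real.sqrt 2)⁻¹ : ℝ) : ℂ) := rfl
      have e1 : ((WithLp.equiv 2 (Fin 2 → ℂ)).symm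
          ![(((Real.sqrt 2)⁻¹ : ℝ) : ℂ), (((Real.sqrt 2)⁻¹ : ℝ) : ℂ)]) 1 = (((Real.sqrt 2)⁻¹ : ℝ) : ℂ) := rfl
      rw [e0, e1, Complex.conj_ofReal]
      rw [show (((Real.sqrt 2)⁻¹:ℝ):ℂ) * ((c:ℂ) * (((Real.sqrt 2)⁻¹:ℝ):ℂ))
          = (c:ℂ) * ((((Real.sqrt 2)⁻¹:ℝ):ℂ) * (((Real.sqrt 2)⁻¹:ℝ):ℂ)) by ring, sq_aux]
      rw [show ((c:ℝ):ℂ) * (((1:ℝ)/2 : ℝ) : ℂ) = ((c/2 : ℝ) : ℂ) by push_cast; ring]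
      rw [Complex.norm_real, Real.norm_eq_abs, abs_of_nonneg (by positivity)]
  exact le_csSup ⟨c/2, hub⟩ hmem

end P3

section P4

variable {p q : ℕ} {c : ℝ}

/-- abbreviation for the direct sum matrix -/
noncomputable def Mp (p q : ℕ) (c : ℝ) : Matrix ((Fin 2 × Fin p) ⊕ Fin q) ((Fin 2 × Fin p) ⊕ Fin q) ℂ :=
  Matrix.fromBlocks (Matrix.blockDiagonal fun _ : Fin p => !![0, (c:ℂ); 0, 0]) 0 0
    (0 : Matrix (Fin q) (Fin q) ℂ)

lemma mp_mulVec (y : (Fin 2 × Fin p ⊕ Fin q) → ℂ) (j : Fin 2 × Fin p ⊕ Fin q) :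
    ((Mp p q c).mulVec y) j
      = Sum.elim (fun ki : Fin 2 × Fin p => if ki.1 = 0 then (c:ℂ) * y (Sum.inl (1, ki.2)) else 0)
          (fun _ => 0) j := by
  cases j with
  | inl ki =>
      obtain ⟨k, i⟩ := ki
      fin_cases k <;>
        simp [Mp, Matrix.mulVec, dotProduct, Fintype.sum_sum_type, Fintype.sum_prod_type,
          Matrix.blockDiagonal_apply, Fin.sum_univ_two, ite_mul, Finset.sum_ite_eq]
  | inr k =>
      simp [Mp, Matrix.mulVec, dotProduct, Fintype.sum_sum_type]

lemma inner_Mp (x : EuclideanSpace ℂ (Fin 2 × Fin p ⊕ Fin q)) :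
    (inner ℂ x (Matrix.toEuclideanLin (Mp p q c) x) : ℂ)
      = ∑ i : Fin p, (starRingEnd ℂ) (x (Sum.inl (0, i))) * ((c:ℂ) * x (Sum.inl (1, i))) := by
  rw [Matrix.toEuclideanLin_apply, PiLp.inner_apply]
  simp only [RCLike.inner_apply]
  have hy : ∀ j, ((WithLp.equiv 2 ((Fin 2 × Fin p ⊕ Fin q) → ℂ)).symm
      ((Mp p q c).mulVec ((WithLp.equiv 2 _) x))) j = ((Mp p q c).mulVec x) j := fun _ => rfl
  simp only [hy, mp_mulVec]
  rw [Fintype.sum_sum_type, Fintype.sum_prod_type, Fin.sum_univ_two]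
  simp
  exact Finset.sum_congr rfl fun _ _ => mul_comm _ _

lemma mp_bound (hc : 0 ≤ c) :
    ∀ r ∈ {r : ℝ | ∃ x : EuclideanSpace ℂ (Fin 2 × Fin p ⊕ Fin q), ‖x‖ = 1 ∧
      ‖(inner ℂ x (Matrix.toEuclideanLin (Mp p q c) x) : ℂ)‖ = r}, r ≤ c / 2 := by
  rintro r ⟨x, hx, rfl⟩
  rw [inner_Mp]
  have h1 : ‖∑ i : Fin p,
        (starRingEnd ℂ) (x (Sum.inl (0, i))) * ((c:ℂ) * x (Sum.inl (1, i)))‖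
      ≤ ∑ i : Fin p, c * (‖x (Sum.inl (0, i))‖ * ‖x (Sum.inl (1, i))‖) := by
    refine le_trans (norm_sum_le _ _) (le_of_eq (Finset.sum_congr rfl fun i _ => ?_))
    rw [norm_mul, norm_mul]
    simp [Complex.norm_conj, abs_of_nonneg hc]
    ring
  have h2 : ∑ i : Fin p, c * (‖x (Sum.inl (0, i))‖ * ‖x (Sum.inl (1, i))‖)
      ≤ (c / 2) * ∑ i : Fin p, (‖x (Sum.inl (0, i))‖ ^ 2 + ‖x (Sum.inl (1, i))‖ ^ 2) := by
    rw [Finset.mul_sum]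
    refine Finset.sum_le_sum fun i _ => ?_
    nlinarith [sq_nonneg (‖x (Sum.inl (0, i))‖ - ‖x (Sum.inl (1, i))‖), norm_nonneg (x (Sum.inl (0,i))), norm_nonneg (x (Sum.inl (1,i)))]
  have h3 : ∑ i : Fin p, (‖x (Sum.inl (0, i))‖ ^ 2 + ‖x (Sum.inl (1, i))‖ ^ 2) ≤ 1 := by
    have h4 := sum_norm_sq_eq x
    rw [hx, one_pow, Fintype.sum_sum_type, Fintype.sum_prod_type, Fin.sum_univ_two] at h4
    have h5 : (0:ℝ) ≤ ∑ k : Fin q, ‖x (Sum.inr k)‖ ^ 2 := by positivity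
    rw [Finset.sum_add_distrib]
    linarith
  calc ‖_‖ ≤ (c/2) * ∑ i : Fin p, (‖x (Sum.inl (0, i))‖ ^ 2 + ‖x (Sum.inl (1, i))‖ ^ 2) :=
        le_trans h1 h2
    _ ≤ (c/2) * 1 := by
        apply mul_le_mul_of_nonneg_left h3 (by positivity)
    _ = c/2 := mul_one _

lemma numRadius_Mp_le (hc : 0 ≤ c) : numRadius (Mp p q c) ≤ c / 2 :=
  Real.sSup_le (mp_bound hc) (by positivity)

lemma numRadius_Mp (hc : 0 ≤ c) (i0 : Fin p) : numRadius (Mp p q c) = c / 2 := by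
  refine le_antisymm (numRadius_Mp_le hc) ?_
  set a : ℂ := (((Real.sqrt 2)⁻¹ : ℝ) : ℂ) with ha
  set x : EuclideanSpace ℂ (Fin 2 × Fin p ⊕ Fin q) :=
    a • (EuclideanSpace.single (Sum.inl (0, i0)) 1 + EuclideanSpace.single (Sum.inl (1, i0)) 1) with hxdef
  have hx0 : ∀ j, x j = a * ((if j = Sum.inl (0, i0) then 1 else 0) + (if j = Sum.inl (1, i0) then 1 else 0)) := by
    intro j
    rw [hxdef]
    simp [EuclideanSpace.single_apply]
    split_ifs <;> ring
  have hxnorm : ‖x‖ = 1 := by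
    have hsq : ‖x‖ ^ 2 = 1 := by
      rw [← sum_norm_sq_eq]
      have : ∀ j, ‖x j‖ ^ 2 = if j = Sum.inl ((0 : Fin 2), i0) ∨ j = Sum.inl ((1 : Fin 2), i0) then 1/2 else 0 := by
        intro j
        rw [hx0 j]
        by_cases h1 : j = Sum.inl ((0 : Fin 2), i0)
        · rw [if_pos h1, if_neg (by simp [h1]), if_pos (Or.inl h1)]
          rw [norm_mul, mul_pow]
          rw [ha]
          rw [norm_aux]
          norm_num
        · by_cases h2 : j = Sum.inl ((1 : Fin 2), i0)
          · rw [if_neg h1, if_pos h2, if_pos (Or.inr h2), norm_mul, mul_pow, ha, norm_aux]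
            norm_num
          · rw [if_neg h1, if_neg h2, if_neg (by tauto)]
            simp
      rw [Finset.sum_congr rfl fun j _ => this j]
      have hsplit : ∀ j : Fin 2 × Fin p ⊕ Fin q,
          (if j = Sum.inl ((0 : Fin 2), i0) ∨ j = Sum.inl ((1 : Fin 2), i0) then (1/2 : ℝ) else 0)
            = (if j = Sum.inl ((0 : Fin 2), i0) then (1/2 : ℝ) else 0)
              + (if j = Sum.inl ((1 : Fin 2), i0) then (1/2 : ℝ) else 0) := by
        intro j
        by_cases h1 : j = Sum.inl ((0 : Fin 2), i0)
        · rw [if_pos (Or.inl h1), if_pos h1, if_neg (by simp [h1]), add_zero]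
        · by_cases h2 : j = Sum.inl ((1 : Fin 2), i0)
          · rw [if_pos (Or.inr h2), if_neg h1, if_pos h2, zero_add]
          · rw [if_neg (by tauto), if_neg h1, if_neg h2, add_zero]
      rw [Finset.sum_congr rfl fun j _ => hsplit j, Finset.sum_add_distrib]
      simp only [Finset.sum_ite_eq', Finset.mem_univ, if_pos]
      norm_num
    nlinarith [norm_nonneg x]
  have hval : (inner ℂ x (Matrix.toEuclideanLin (Mp p q c) x) : ℂ) = ((c/2 : ℝ) : ℂ) := by
    rw [inner_Mp]
    have hxA : x (Sum.inl ((0:Fin 2), i0)) = a := by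
      rw [hx0, if_pos rfl, if_neg (by simp), add_zero, mul_one]
    have hxB : x (Sum.inl ((1:Fin 2), i0)) = a := by
      rw [hx0, if_neg (by simp), if_pos rfl, zero_add, mul_one]
    rw [Finset.sum_eq_single i0]
    · rw [hxA, hxB]
      rw [show (starRingEnd ℂ) a = a by rw [ha, Complex.conj_ofReal]]
      rw [show a * ((c:ℂ) * a) = (c:ℂ) * (a * a) by ring, ha, sq_aux]
      push_cast
      ring
    · intro i _ hi
      rw [hx0]
      rw [if_neg (by simp [hi]), if_neg (by simp)]
      simp
    · intro h
      exact absurd (Finset.mem_univ i0) h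
  refine le_csSup ⟨c/2, mp_bound hc⟩ ⟨x, hxnorm, ?_⟩
  rw [hval, Complex.norm_real, Real.norm_eq_abs, abs_of_nonneg (by positivity)]

end P4

section P5
variable {p q : ℕ} {c : ℝ}

lemma toEuclideanLin_apply' {ι κ : Type*} [Fintype ι] [Fintype κ] [DecidableEq κ]
    (M : Matrix ι κ ℂ) (y : EuclideanSpace ℂ κ) (j : ι) :
    (Matrix.toEuclideanLin M y) j = (M.mulVec y) j := rfl

lemma mp_single_inl0 (i : Fin p) :
    Matrix.toEuclideanLin (Mp p q c) (EuclideanSpace.single (Sum.inl ((0 : Fin 2), i)) 1) = 0 := by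
  ext l
  rw [toEuclideanLin_apply', mp_mulVec]
  cases l with
  | inl ki =>
      simp [EuclideanSpace.single_apply]
  | inr k => simp

lemma mp_single_inl1 (i : Fin p) :
    Matrix.toEuclideanLin (Mp p q c) (EuclideanSpace.single (Sum.inl ((1 : Fin 2), i)) 1)
      = (c : ℂ) • EuclideanSpace.single (Sum.inl ((0 : Fin 2), i)) 1 := by
  ext l
  rw [toEuclideanLin_apply', mp_mulVec]
  cases l with
  | inl ki =>
      obtain ⟨k, i'⟩ := ki
      fin_cases k <;>
        simp [EuclideanSpace.single_apply, Prod.ext_iff, eq_comm]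
  | inr k => simp [EuclideanSpace.single_apply]

lemma mp_single_inr (k : Fin q) :
    Matrix.toEuclideanLin (Mp p q c) (EuclideanSpace.single (Sum.inr k : Fin 2 × Fin p ⊕ Fin q) 1) = 0 := by
  ext l
  rw [toEuclideanLin_apply', mp_mulVec]
  cases l with
  | inl ki => simp [EuclideanSpace.single_apply]
  | inr k' => simp

lemma zero_similar {n₁ n₂ : ℕ} (A₁ : Matrix (Fin n₁) (Fin n₂) ℂ) (hA : A₁ = 0) (c : ℝ) :
    UnitarilySimilar (Matrix.fromBlocks (0 : Matrix (Fin n₁) (Fin n₁) ℂ) A₁ 0 0)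
      (Mp 0 (n₁ + n₂) c) := by
  have hcard : Fintype.card (Fin n₁ ⊕ Fin n₂) = Fintype.card (Fin 2 × Fin 0 ⊕ Fin (n₁ + n₂)) := by
    simp
  refine ⟨(LinearIsometryEquiv.piLpCongrLeft 2 ℂ ℂ (Fintype.equivOfCardEq hcard)), fun x => ?_⟩
  have h1 : Matrix.fromBlocks (0 : Matrix (Fin n₁) (Fin n₁) ℂ) A₁ (0 : Matrix (Fin n₂) (Fin n₁) ℂ)
      (0 : Matrix (Fin n₂) (Fin n₂) ℂ) = 0 := by
    rw [hA]; exact Matrix.fromBlocks_zero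
  have h2 : (Mp 0 (n₁ + n₂) c) = 0 := by
    ext j l
    cases j with
    | inl ki => exact ki.2.elim0
    | inr k =>
        cases l with
        | inl ki => exact ki.2.elim0
        | inr k' => simp [Mp]
  rw [h1, h2, map_zero, map_zero, LinearMap.zero_apply, LinearMap.zero_apply, map_zero]

set_option maxHeartbeats 1000000 in
lemma similar_aux {n₁ n₂ : ℕ} (A₁ : Matrix (Fin n₁) (Fin n₂) ℂ) (γ : ℝ) (hγ : 0 < γ)
    (hK : ∀ v : EuclideanSpace ℂ (Fin n₂), v ∈ (LinearMap.ker (Matrix.toEuclideanLin A₁))ᗮ →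
      ‖Matrix.toEuclideanLin A₁ v‖ = γ * ‖v‖) :
    ∃ p q : ℕ, UnitarilySimilar (Matrix.fromBlocks (0 : Matrix (Fin n₁) (Fin n₁) ℂ) A₁ 0 0)
      (Mp p q γ) := by
  classical
  set Amat : Matrix ((Fin n₁) ⊕ (Fin n₂)) ((Fin n₁) ⊕ (Fin n₂)) ℂ :=
    Matrix.fromBlocks (0 : Matrix (Fin n₁) (Fin n₁) ℂ) A₁ (0 : Matrix (Fin n₂) (Fin n₁) ℂ)
      (0 : Matrix (Fin n₂) (Fin n₂) ℂ) with hAmat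
  set T : EuclideanSpace ℂ (Fin n₂) →ₗ[ℂ] EuclideanSpace ℂ (Fin n₁) := Matrix.toEuclideanLin A₁ with hT
  set K : Submodule ℂ (EuclideanSpace ℂ (Fin n₂)) := (LinearMap.ker T)ᗮ with hKdef
  have hγℂ : ((γ : ℝ) : ℂ) ≠ 0 := Complex.ofReal_ne_zero.mpr hγ.ne'
  -- the isometry (1/γ) T restricted to K
  set Sl : K →ₗᵢ[ℂ] EuclideanSpace ℂ (Fin n₁) :=
    { toLinearMap := (((γ : ℝ) : ℂ))⁻¹ • (T.comp K.subtype)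
      norm_map' := by
        intro v
        have h1 : ‖T (v : EuclideanSpace ℂ (Fin n₂))‖ = γ * ‖v‖ := hK _ v.2
        simp only [LinearMap.smul_apply, LinearMap.coe_comp, Function.comp_apply,
          Submodule.coe_subtype, norm_smul]
        rw [h1]
        rw [norm_inv, Complex.norm_real, Real.norm_eq_abs, abs_of_pos hγ]
        field_simp } with hSl
  set pp : ℕ := Module.finrank ℂ K with hpp
  set e : OrthonormalBasis (Fin pp) ℂ K := stdOrthonormalBasis ℂ K with he
  set f : Fin pp → EuclideanSpace ℂ (Fin n₁) := fun i => Sl (e i) with hf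
  have horthf : Orthonormal ℂ f := e.orthonormal.comp_linearIsometry Sl
  have hTe : ∀ i, T ((e i : K) : EuclideanSpace ℂ (Fin n₂)) = ((γ : ℝ) : ℂ) • f i := by
    intro i
    have : f i = (((γ : ℝ) : ℂ))⁻¹ • T ((e i : K) : EuclideanSpace ℂ (Fin n₂)) := rfl
    rw [this, smul_inv_smul₀ hγℂ]
  set G₀ : Fin 2 × Fin pp → EuclideanSpace ℂ (Fin n₁ ⊕ Fin n₂) :=
    fun ki => if ki.1 = 0 then glue (f ki.2) 0 else glue 0 ((e ki.2 : K) : EuclideanSpace ℂ (Fin n₂))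
    with hG₀
  set S : Submodule ℂ (EuclideanSpace ℂ (Fin n₁ ⊕ Fin n₂)) := Submodule.span ℂ (Set.range G₀) with hS
  set qq : ℕ := Module.finrank ℂ Sᗮ with hqq
  set w : OrthonormalBasis (Fin qq) ℂ Sᗮ := stdOrthonormalBasis ℂ Sᗮ with hw
  set G : (Fin 2 × Fin pp) ⊕ Fin qq → EuclideanSpace ℂ (Fin n₁ ⊕ Fin n₂) :=
    Sum.elim G₀ (fun k => ((w k : Sᗮ) : EuclideanSpace ℂ (Fin n₁ ⊕ Fin n₂))) with hG
  -- orthonormality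
  have hfip : ∀ i j, (inner ℂ (f i) (f j) : ℂ) = if i = j then 1 else 0 := orthonormal_iff_ite.mp horthf
  have heip : ∀ i j, (inner ℂ ((e i : K) : EuclideanSpace ℂ (Fin n₂)) ((e j : K) : EuclideanSpace ℂ (Fin n₂)) : ℂ)
      = if i = j then 1 else 0 := by
    intro i j
    rw [← Submodule.coe_inner]
    exact orthonormal_iff_ite.mp e.orthonormal i j
  have hG₀mem : ∀ z, G₀ z ∈ S := fun z => Submodule.subset_span ⟨z, rfl⟩
  have horthG : Orthonormal ℂ G := by
    rw [orthonormal_iff_ite]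
    rintro (⟨k, i⟩ | k) (⟨k', i'⟩ | k')
    · have hq0 : ∀ i, G (Sum.inl ((0:Fin 2), i)) = glue (f i) 0 := fun i => by
        simp [hG, hG₀]
      have hq1 : ∀ i, G (Sum.inl ((1:Fin 2), i))
          = glue 0 ((e i : K) : EuclideanSpace ℂ (Fin n₂)) := fun i => by
        simp [hG, hG₀]
      have hk2 : ∀ k : Fin 2, k = 0 ∨ k = 1 := by decide
      rcases hk2 k with rfl | rfl <;> rcases hk2 k' with rfl | rfl
      · rw [hq0, hq0, inner_glue, hfip, inner_zero_left, add_zero]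
        by_cases h : i = i'
        · subst h; simp
        · rw [if_neg h, if_neg (by simp [h])]
      · rw [hq0, hq1, inner_glue, inner_zero_right, inner_zero_left, add_zero,
          if_neg (by simp [Prod.ext_iff, Fin.ext_iff])]
      · rw [hq1, hq0, inner_glue, inner_zero_left, inner_zero_right, add_zero,
          if_neg (by simp [Prod.ext_iff, Fin.ext_iff])]
      · rw [hq1, hq1, inner_glue, heip, inner_zero_left, zero_add]
        by_cases h : i = i'
        · subst h; simp
        · rw [if_neg h, if_neg (by simp [h])]
    · have h0 : (inner ℂ (G₀ (k, i)) ((w k' : Sᗮ) : EuclideanSpace ℂ (Fin n₁ ⊕ Fin n₂)) : ℂ) = 0 :=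
        (Submodule.mem_orthogonal S _).mp (w k').2 _ (hG₀mem (k, i))
      simpa [hG] using h0
    · have h0 : (inner ℂ (G₀ (k', i')) ((w k : Sᗮ) : EuclideanSpace ℂ (Fin n₁ ⊕ Fin n₂)) : ℂ) = 0 :=
        (Submodule.mem_orthogonal S _).mp (w k).2 _ (hG₀mem (k', i'))
      rw [inner_eq_zero_symm] at h0
      simpa [hG] using h0
    · have := orthonormal_iff_ite.mp w.orthonormal k k'
      rw [Submodule.coe_inner] at this
      simpa [hG] using this
  -- spanning
  have hspan : ⊤ ≤ Submodule.span ℂ (Set.range G) := by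
    rw [hG, Set.Sum.elim_range, Submodule.span_union]
    have h1 : Set.range (fun k => ((w k : Sᗮ) : EuclideanSpace ℂ (Fin n₁ ⊕ Fin n₂)))
        = Sᗮ.subtype '' Set.range w := by
      rw [← Set.range_comp]; rfl
    have h2 : Submodule.span ℂ (Set.range (fun k => ((w k : Sᗮ) : EuclideanSpace ℂ (Fin n₁ ⊕ Fin n₂)))) = Sᗮ := by
      rw [h1, ← Submodule.map_span]
      have h3 : Submodule.span ℂ (Set.range ⇑w) = ⊤ := by
        rw [← w.coe_toBasis]; exact w.toBasis.span_eq
      rw [h3, Submodule.map_top, Submodule.range_subtype]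
    rw [h2, ← hS, Submodule.sup_orthogonal_of_hasOrthogonalProjection]
  set B : OrthonormalBasis ((Fin 2 × Fin pp) ⊕ Fin qq) ℂ (EuclideanSpace ℂ (Fin n₁ ⊕ Fin n₂)) :=
    OrthonormalBasis.mk horthG hspan with hB
  have hBcoe : ⇑B = G := OrthonormalBasis.coe_mk horthG hspan
  -- K is spanned by the (e i)
  have hKspan : Submodule.span ℂ (Set.range (fun i => ((e i : K) : EuclideanSpace ℂ (Fin n₂)))) = K := by
    have h1 : Set.range (fun i => ((e i : K) : EuclideanSpace ℂ (Fin n₂))) = K.subtype '' Set.range e := by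
      rw [← Set.range_comp]; rfl
    rw [h1, ← Submodule.map_span]
    have h3 : Submodule.span ℂ (Set.range ⇑e) = ⊤ := by
      rw [← e.coe_toBasis]; exact e.toBasis.span_eq
    rw [h3, Submodule.map_top, Submodule.range_subtype]
  -- action of A on the basis
  have hA0 : ∀ i, Matrix.toEuclideanLin Amat
      (glue (f i) (0 : EuclideanSpace ℂ (Fin n₂))) = 0 := by
    intro i
    rw [hAmat, toEuclideanLin_fromBlocks, rightE_glue, ← hT, map_zero, glue_zero_zero]
  have hA1 : ∀ i, Matrix.toEuclideanLin Amat
      (glue 0 ((e i : K) : EuclideanSpace ℂ (Fin n₂)))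
        = ((γ : ℝ) : ℂ) • glue (f i) (0 : EuclideanSpace ℂ (Fin n₂)) := by
    intro i
    rw [hAmat, toEuclideanLin_fromBlocks, rightE_glue, ← hT, hTe i]
    have hgs := glue_smul (((γ : ℝ) : ℂ)) (f i) (0 : EuclideanSpace ℂ (Fin n₂))
    rw [smul_zero] at hgs
    rw [hgs]
  have hA2 : ∀ k : Fin qq, Matrix.toEuclideanLin Amat
      ((w k : Sᗮ) : EuclideanSpace ℂ (Fin n₁ ⊕ Fin n₂)) = 0 := by
    intro k
    rw [hAmat, toEuclideanLin_fromBlocks, ← hT]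
    have hy := (w k).2
    have hre : rightE ((w k : Sᗮ) : EuclideanSpace ℂ (Fin n₁ ⊕ Fin n₂)) ∈ Kᗮ := by
      rw [Submodule.mem_orthogonal]
      intro u hu
      rw [← hKspan] at hu
      induction hu using Submodule.span_induction with
      | mem u hu =>
          obtain ⟨i, rfl⟩ := hu
          have h0 : (inner ℂ (G₀ (1, i)) ((w k : Sᗮ) : EuclideanSpace ℂ (Fin n₁ ⊕ Fin n₂)) : ℂ) = 0 :=
            (Submodule.mem_orthogonal S _).mp hy _ (hG₀mem (1, i))
          rw [hG₀] at h0
          simp only [if_neg (by decide : ¬((1:Fin 2) = 0))] at h0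
          have hrw : (inner ℂ (glue (0 : EuclideanSpace ℂ (Fin n₁)) ((e i : K) : EuclideanSpace ℂ (Fin n₂)))
              ((w k : Sᗮ) : EuclideanSpace ℂ (Fin n₁ ⊕ Fin n₂)) : ℂ)
              = inner ℂ ((e i : K) : EuclideanSpace ℂ (Fin n₂))
                  (rightE ((w k : Sᗮ) : EuclideanSpace ℂ (Fin n₁ ⊕ Fin n₂))) := by
            conv_lhs => rw [← glue_leftE_rightE ((w k : Sᗮ) : EuclideanSpace ℂ (Fin n₁ ⊕ Fin n₂))]
            rw [inner_glue, inner_zero_left, zero_add]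
          rw [hrw] at h0
          exact h0
      | zero => exact inner_zero_left _
      | add u v hu hv h1 h2 => rw [inner_add_left, h1, h2, add_zero]
      | smul a u hu h1 => rw [inner_smul_left, h1, mul_zero]
    have hker : rightE ((w k : Sᗮ) : EuclideanSpace ℂ (Fin n₁ ⊕ Fin n₂)) ∈ LinearMap.ker T := by
      rw [hKdef, Submodule.orthogonal_orthogonal] at hre
      exact hre
    rw [LinearMap.mem_ker.mp hker, glue_zero_zero]
  -- conclude
  refine ⟨pp, qq, B.repr, fun x => ?_⟩
  have key : ∀ j, B.repr (Matrix.toEuclideanLin Amat (B j))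
      = Matrix.toEuclideanLin (Mp pp qq γ) (B.repr (B j)) := by
    rintro (⟨k, i⟩ | k)
    · have hk2 : ∀ k : Fin 2, k = 0 ∨ k = 1 := by decide
      rcases hk2 k with rfl | rfl
      · have hBj : B (Sum.inl ((0 : Fin 2), i)) = glue (f i) (0 : EuclideanSpace ℂ (Fin n₂)) := by
          rw [hBcoe, hG]; simp [hG₀]
        rw [OrthonormalBasis.repr_self, hBj, hA0 i, map_zero, mp_single_inl0]
      · have hBj : B (Sum.inl ((1 : Fin 2), i)) = glue 0 ((e i : K) : EuclideanSpace ℂ (Fin n₂)) := by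
          rw [hBcoe, hG]; simp [hG₀]
        have hBj0 : B (Sum.inl ((0 : Fin 2), i)) = glue (f i) (0 : EuclideanSpace ℂ (Fin n₂)) := by
          rw [hBcoe, hG]; simp [hG₀]
        rw [OrthonormalBasis.repr_self, hBj, hA1 i, _root_.map_smul, mp_single_inl1,
          ← hBj0, OrthonormalBasis.repr_self]
    · have hBj : B (Sum.inr k) = ((w k : Sᗮ) : EuclideanSpace ℂ (Fin n₁ ⊕ Fin n₂)) := by
        rw [hBcoe, hG]; simp
      rw [OrthonormalBasis.repr_self, hBj, hA2 k, map_zero, mp_single_inr]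
  -- extend by linearity
  have hlin : (B.repr.toLinearEquiv.toLinearMap).comp (Matrix.toEuclideanLin Amat)
      = (Matrix.toEuclideanLin (Mp pp qq γ)).comp (B.repr.toLinearEquiv.toLinearMap) := by
    apply B.toBasis.ext
    intro j
    have := key j
    simpa [OrthonormalBasis.coe_toBasis] using this
  have := LinearMap.congr_fun hlin x
  simpa using this

end P5

lemma mp_p_zero (q : ℕ) (c : ℝ) : Mp 0 q c = 0 := by
  ext j l
  cases j with
  | inl ki => exact ki.2.elim0
  | inr k =>
      cases l with
      | inl ki => exact ki.2.elim0
      | inr k' => simp [Mp]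


/-- For `A = [[0, A₁], [0, 0]]` and `A''' = [[0, γ(A₁)], [0, 0]]`, equality
`w(A) = w(A''')` holds iff `A` is unitarily similar to a direct sum `A''' ⊕ ⋯ ⊕ A''' ⊕ 0` of
finitely many copies of `A'''` together with a zero matrix. -/
theorem numRadius_two_blocks_eq_superdiag_reducedMinModulus_iff {n₁ n₂ : ℕ}
    (A₁ : Matrix (Fin n₁) (Fin n₂) ℂ) :
    numRadius (Matrix.fromBlocks (0 : Matrix (Fin n₁) (Fin n₁) ℂ) A₁ 0 0)
        = numRadius (!![0, (reducedMinModulus A₁ : ℂ); 0, 0]) ↔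
      ∃ p q : ℕ,
        UnitarilySimilar (Matrix.fromBlocks (0 : Matrix (Fin n₁) (Fin n₁) ℂ) A₁ 0 0)
          (Matrix.fromBlocks
            (Matrix.blockDiagonal fun _ : Fin p => !![0, (reducedMinModulus A₁ : ℂ); 0, 0])
            0 0 (0 : Matrix (Fin q) (Fin q) ℂ)) := by

  set γ : ℝ := reducedMinModulus A₁ with hγdef
  have hγ0 : 0 ≤ γ := rmm_nonneg A₁
  have hRad2 : numRadius (!![0, (γ : ℂ); 0, 0]) = γ / 2 := numRadius_two γ hγ0
  have hRadA : numRadius (Matrix.fromBlocks (0 : Matrix (Fin n₁) (Fin n₁) ℂ) A₁ 0 0)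
      = ‖LinearMap.toContinuousLinearMap (Matrix.toEuclideanLin A₁)‖ / 2 :=
    numRadius_fromBlocks A₁
  set Tc := LinearMap.toContinuousLinearMap (Matrix.toEuclideanLin A₁) with hTcdef
  constructor
  · intro h
    have hnorm : ‖Tc‖ = γ := by
      rw [hRadA, hRad2] at h
      linarith
    by_cases hA : A₁ = 0
    · exact ⟨0, n₁ + n₂, zero_similar A₁ hA γ⟩
    · have hT0 : Matrix.toEuclideanLin A₁ ≠ 0 := fun hcon =>
        hA (Matrix.toEuclideanLin.map_eq_zero_iff.mp hcon)
      have hTc0 : Tc ≠ 0 := fun hcon =>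
        hT0 (LinearMap.toContinuousLinearMap.map_eq_zero_iff.mp hcon)
      have hγpos : 0 < γ := by
        rw [← hnorm]
        exact norm_pos_iff.mpr hTc0
      have hK : ∀ v : EuclideanSpace ℂ (Fin n₂),
          v ∈ (LinearMap.ker (Matrix.toEuclideanLin A₁))ᗮ →
            ‖Matrix.toEuclideanLin A₁ v‖ = γ * ‖v‖ := by
        intro v hv
        have hle : ‖Matrix.toEuclideanLin A₁ v‖ ≤ γ * ‖v‖ := by
          rw [← hnorm]
          exact Tc.le_opNorm v
        rcases eq_or_ne v 0 with rfl | hv0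
        · simp
        · have hnv : (0:ℝ) < ‖v‖ := norm_pos_iff.mpr hv0
          have hv' : ((‖v‖ : ℂ))⁻¹ • v ∈ (LinearMap.ker (Matrix.toEuclideanLin A₁))ᗮ :=
            Submodule.smul_mem _ _ hv
          have hv'n : ‖((‖v‖ : ℂ))⁻¹ • v‖ = 1 := by
            rw [norm_smul]
            simp [hnv.ne']
          have hge := rmm_le A₁ hA _ hv'n hv'
          rw [_root_.map_smul, norm_smul] at hge
          have h1 : ‖((‖v‖ : ℂ))⁻¹‖ = ‖v‖⁻¹ := by simp
          rw [h1, ← hγdef] at hge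
          have := mul_le_mul_of_nonneg_left hge hnv.le
          rw [← mul_assoc, mul_inv_cancel₀ hnv.ne', one_mul] at this
          linarith [mul_comm γ ‖v‖ ▸ this]
      obtain ⟨p, q, hsim⟩ := similar_aux A₁ γ hγpos hK
      exact ⟨p, q, hsim⟩
  · rintro ⟨p, q, hsim⟩
    have hsim' : UnitarilySimilar (Matrix.fromBlocks (0 : Matrix (Fin n₁) (Fin n₁) ℂ) A₁ 0 0)
        (Mp p q γ) := hsim
    have hw := numRadius_unitarilySimilar hsim'
    rcases Nat.eq_zero_or_pos p with rfl | hp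
    · rw [mp_p_zero, numRadius_zero] at hw
      have hTc : ‖Tc‖ = 0 := by
        rw [hRadA] at hw
        linarith
      have hA : A₁ = 0 := by
        have h1 : Tc = 0 := norm_eq_zero.mp hTc
        have h2 : Matrix.toEuclideanLin A₁ = 0 :=
          LinearMap.toContinuousLinearMap.map_eq_zero_iff.mp h1
        exact Matrix.toEuclideanLin.map_eq_zero_iff.mp h2
      have hγz : γ = 0 := by rw [hγdef, hA, rmm_zero]
      rw [hRad2, hRadA, hTc, hγz]
    · have hmp : numRadius (Mp p q γ) = γ / 2 := numRadius_Mp hγ0 ⟨0, hp⟩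
      rw [hw, hmp, hRad2]
end

section
/- Let A_1 be an n_1×n_2 complex matrix and A_2 an n_2×n_3 complex matrix with rank A_1 + rank A_2 > n_2, let A be the n×n block matrix on ℂⁿ = ℂ^{n₁} ⊕ ℂ^{n₂} ⊕ ℂ^{n₃} with blocks A_1 in position (1,2) and A_2 in position (2,3) and zeros elsewhere, and let A''' be the 3×3 matrix with (1,2) entry γ(A_1), (2,3) entry γ(A_2), and all other entries zero. Then w(A) ≥ w(A'''). -/
open Matrix LinearMap Module

section aux
variable {m n : Type*} [Fintype m] [Fintype n] [DecidableEq n]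

lemma reducedMinModulus_nonneg (A : Matrix m n ℂ) : 0 ≤ reducedMinModulus A := by
  unfold reducedMinModulus
  split
  · exact le_refl _
  · exact Real.sInf_nonneg (by rintro r ⟨x, hx, hk, rfl⟩; positivity)

lemma reducedMinModulus_le (A : Matrix m n ℂ) (hA : A ≠ 0) {x : EuclideanSpace ℂ n}
    (hx : ‖x‖ = 1) (hxk : x ∈ (LinearMap.ker (Matrix.toEuclideanLin A))ᗮ) :
    reducedMinModulus A ≤ ‖Matrix.toEuclideanLin A x‖ := by
  unfold reducedMinModulus
  rw [if_neg hA]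
  exact csInf_le ⟨0, by rintro r ⟨y, hy, hyk, rfl⟩; positivity⟩ ⟨x, hx, hxk, rfl⟩

lemma sum_norm_sq_of_unit {ι : Type*} [Fintype ι] {u : EuclideanSpace ℂ ι} (hu : ‖u‖ = 1) :
    ∑ i, ‖u i‖ ^ 2 = 1 :=
  Real.sqrt_eq_one.mp (by rw [← EuclideanSpace.norm_eq, hu])

lemma finrank_range_toEuclideanLin [DecidableEq m] (M : Matrix m n ℂ) :
    finrank ℂ (LinearMap.range (Matrix.toEuclideanLin M)) = M.rank := by
  rw [Matrix.toEuclideanLin_eq_toLin,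
    ← Matrix.rank_eq_finrank_range_toLin M (PiLp.basisFun 2 ℂ m) (PiLp.basisFun 2 ℂ n)]

end aux

set_option maxHeartbeats 2000000 in
/-- For the 3-block shift `A` with blocks `A₁, A₂` satisfying
`rank A₁ + rank A₂ > n₂`, and `A'''` the 3×3 shift with superdiagonal `γ(A₁), γ(A₂)`, one has
`w(A) ≥ w(A''')`. -/
theorem numRadius_superdiag_reducedMinModulus_le_numRadius_three_blocks {n₁ n₂ n₃ : ℕ}
    (A₁ : Matrix (Fin n₁) (Fin n₂) ℂ) (A₂ : Matrix (Fin n₂) (Fin n₃) ℂ)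
    (hrank : n₂ < A₁.rank + A₂.rank) :
    numRadius (!![0, (reducedMinModulus A₁ : ℂ), 0;
                  0, 0, (reducedMinModulus A₂ : ℂ);
                  0, 0, 0])
      ≤ numRadius (Matrix.fromBlocks (0 : Matrix (Fin n₁) (Fin n₁) ℂ)
          (Matrix.fromCols A₁ (0 : Matrix (Fin n₁) (Fin n₃) ℂ)) 0
          (Matrix.fromBlocks (0 : Matrix (Fin n₂) (Fin n₂) ℂ) A₂ 0 0)) := by
  classical
  have hr₁w : A₁.rank ≤ n₂ := A₁.rank_le_width
  have hr₂h : A₂.rank ≤ n₂ := A₂.rank_le_height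
  have hr₁ : 0 < A₁.rank := by omega
  have hr₂ : 0 < A₂.rank := by omega
  have hA₁ne : A₁ ≠ 0 := by rintro rfl; simp [Matrix.rank_zero] at hr₁
  have hA₂ne : A₂ ≠ 0 := by rintro rfl; simp [Matrix.rank_zero] at hr₂
  set T₁ := Matrix.toEuclideanLin A₁ with hT₁
  set T₂ := Matrix.toEuclideanLin A₂ with hT₂
  set U : Submodule ℂ (EuclideanSpace ℂ (Fin n₂)) := LinearMap.range T₂ with hU
  set V : Submodule ℂ (EuclideanSpace ℂ (Fin n₂)) := (LinearMap.ker T₁)ᗮ with hV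
  have hUrk : finrank ℂ U = A₂.rank := finrank_range_toEuclideanLin A₂
  have hdim : finrank ℂ (EuclideanSpace ℂ (Fin n₂)) = n₂ := finrank_euclideanSpace_fin
  have hVrk : finrank ℂ V = A₁.rank := by
    have h1 : finrank ℂ (LinearMap.ker T₁) + finrank ℂ V = n₂ := by
      have := Submodule.finrank_add_finrank_orthogonal (LinearMap.ker T₁)
      rw [hdim] at this
      exact this
    have h2 := LinearMap.finrank_range_add_finrank_ker T₁
    rw [finrank_range_toEuclideanLin A₁, hdim] at h2
    omega
  have hIpos : 0 < finrank ℂ ↥(U ⊓ V) := by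
    have h1 := Submodule.finrank_sup_add_finrank_inf_eq U V
    have h2 : finrank ℂ ↥(U ⊔ V) ≤ n₂ := (Submodule.finrank_le _).trans_eq hdim
    omega
  obtain ⟨⟨w, hwUV⟩, hwne⟩ := Module.finrank_pos_iff_exists_ne_zero.mp hIpos
  have hwne' : w ≠ 0 := by simpa using hwne
  set y₂ : EuclideanSpace ℂ (Fin n₂) := (‖w‖ : ℂ)⁻¹ • w with hy₂def
  have hy₂norm : ‖y₂‖ = 1 := by
    rw [hy₂def, norm_smul, norm_inv, Complex.norm_real, Real.norm_eq_abs,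
      abs_of_nonneg (norm_nonneg w)]
    exact inv_mul_cancel₀ (norm_ne_zero_iff.mpr hwne')
  have hy₂U : y₂ ∈ U := U.smul_mem _ hwUV.1
  have hy₂V : y₂ ∈ V := V.smul_mem _ hwUV.2
  -- u₁
  have hTy₂ne : T₁ y₂ ≠ 0 := by
    intro h
    have hy₂ker : y₂ ∈ LinearMap.ker T₁ := h
    have := Submodule.mem_orthogonal' _ _ |>.mp hy₂V y₂ hy₂ker
    rw [inner_self_eq_zero.mp this] at hy₂norm
    simp at hy₂norm
  set v₁ : ℝ := ‖T₁ y₂‖ with hv₁def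
  have hv₁pos : 0 < v₁ := norm_pos_iff.mpr hTy₂ne
  have hγ₁le : reducedMinModulus A₁ ≤ v₁ := reducedMinModulus_le A₁ hA₁ne hy₂norm hy₂V
  set u₁ : EuclideanSpace ℂ (Fin n₁) := (v₁ : ℂ)⁻¹ • T₁ y₂ with hu₁def
  have hu₁norm : ‖u₁‖ = 1 := by
    rw [hu₁def, norm_smul, norm_inv, Complex.norm_real, Real.norm_eq_abs,
      abs_of_pos hv₁pos, ← hv₁def]
    field_simp
  have hinner1 : (inner ℂ u₁ (T₁ y₂) : ℂ) = (v₁ : ℂ) := by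
    rw [hu₁def, inner_smul_left, inner_self_eq_norm_sq_to_K, ← hv₁def]
    have hne : (v₁ : ℂ) ≠ 0 := by exact_mod_cast hv₁pos.ne'
    rw [map_inv₀, Complex.conj_ofReal]
    field_simp
    ring
    rfl
  -- u₃
  obtain ⟨z₀, hz₀⟩ := hy₂U
  set K := LinearMap.ker T₂ with hK
  set z : EuclideanSpace ℂ (Fin n₃) := (Submodule.orthogonalProjection Kᗮ z₀ : EuclideanSpace ℂ (Fin n₃)) with hzdef
  have hzK : z ∈ Kᗮ := (Submodule.orthogonalProjection Kᗮ z₀).2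
  have hTz : T₂ z = y₂ := by
    have hmem : z₀ - z ∈ K := by
      have : z₀ - z ∈ Kᗮᗮ := Submodule.sub_starProjection_mem_orthogonal (K := Kᗮ) z₀
      rwa [Submodule.orthogonal_orthogonal] at this
    have : T₂ (z₀ - z) = 0 := hmem
    rw [map_sub] at this
    rw [← hz₀]
    linear_combination (norm := module) -this
  have hzne : z ≠ 0 := by
    intro h
    rw [h, map_zero] at hTz
    rw [← hTz] at hy₂norm
    simp at hy₂norm
  have hznorm : 0 < ‖z‖ := norm_pos_iff.mpr hzne
  set v₂ : ℝ := ‖z‖⁻¹ with hv₂def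
  have hv₂pos : 0 < v₂ := by positivity
  set u₃ : EuclideanSpace ℂ (Fin n₃) := (‖z‖ : ℂ)⁻¹ • z with hu₃def
  have hu₃norm : ‖u₃‖ = 1 := by
    rw [hu₃def, norm_smul, norm_inv, Complex.norm_real, Real.norm_eq_abs,
      abs_of_pos hznorm]
    field_simp
  have hTu₃ : T₂ u₃ = (v₂ : ℂ) • y₂ := by
    rw [hu₃def, _root_.map_smul, hTz, hv₂def]
    norm_num
  have hγ₂le : reducedMinModulus A₂ ≤ v₂ := by
    have := reducedMinModulus_le A₂ hA₂ne hu₃norm (Kᗮ.smul_mem _ hzK)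
    rw [← hT₂] at this
    rwa [hTu₃, norm_smul, hy₂norm, mul_one, Complex.norm_real,
      Real.norm_eq_abs, abs_of_pos hv₂pos] at this
  have hinner2 : (inner ℂ y₂ (T₂ u₃) : ℂ) = (v₂ : ℂ) := by
    rw [hTu₃, inner_smul_right, inner_self_eq_norm_sq_to_K, hy₂norm]
    norm_num
  -- the big matrix and boundedness
  set Abig := Matrix.fromBlocks (0 : Matrix (Fin n₁) (Fin n₁) ℂ)
      (Matrix.fromCols A₁ (0 : Matrix (Fin n₁) (Fin n₃) ℂ)) 0
      (Matrix.fromBlocks (0 : Matrix (Fin n₂) (Fin n₂) ℂ) A₂ 0 0) with hAbigdef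
  set S : Set ℝ := {r : ℝ | ∃ x : EuclideanSpace ℂ (Fin n₁ ⊕ (Fin n₂ ⊕ Fin n₃)), ‖x‖ = 1 ∧
    ‖(inner ℂ x (Matrix.toEuclideanLin Abig x) : ℂ)‖ = r} with hSdef
  have hbdd : BddAbove S := by
    refine ⟨‖LinearMap.toContinuousLinearMap (Matrix.toEuclideanLin Abig)‖, ?_⟩
    rintro r ⟨x, hx, rfl⟩
    calc ‖(inner ℂ x (Matrix.toEuclideanLin Abig x) : ℂ)‖
        = ‖(inner ℂ x (Matrix.toEuclideanLin Abig x) : ℂ)‖ := rfl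
      _ ≤ ‖x‖ * ‖Matrix.toEuclideanLin Abig x‖ := norm_inner_le_norm _ _
      _ = ‖LinearMap.toContinuousLinearMap (Matrix.toEuclideanLin Abig) x‖ := by
          rw [hx, one_mul, LinearMap.coe_toContinuousLinearMap']
      _ ≤ ‖LinearMap.toContinuousLinearMap (Matrix.toEuclideanLin Abig)‖ * ‖x‖ :=
          ContinuousLinearMap.le_opNorm _ _
      _ = _ := by rw [hx, mul_one]
  -- S₁ and S₂ identities
  have hS₁ : ∑ i, (starRingEnd ℂ) (u₁ i) * (A₁ *ᵥ (fun j => y₂ j)) i = (v₁ : ℂ) := by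
    rw [← hinner1, hT₁, PiLp.inner_apply]
    simp [RCLike.inner_apply]
    exact Finset.sum_congr rfl (fun i _ => mul_comm _ _)
  have hS₂ : ∑ i, (starRingEnd ℂ) (y₂ i) * (A₂ *ᵥ (fun j => u₃ j)) i = (v₂ : ℂ) := by
    rw [← hinner2, hT₂, PiLp.inner_apply]
    simp [RCLike.inner_apply]
    exact Finset.sum_congr rfl (fun i _ => mul_comm _ _)
  have hn₁pos : 0 < n₁ := lt_of_lt_of_le hr₁ A₁.rank_le_height
  -- nonnegativity of the sup
  have hsupnonneg : 0 ≤ sSup S := by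
    set x₀ : EuclideanSpace ℂ (Fin n₁ ⊕ (Fin n₂ ⊕ Fin n₃)) :=
      EuclideanSpace.single (Sum.inl ⟨0, hn₁pos⟩) 1 with hx₀def
    have hx₀ : ‖x₀‖ = 1 := by simp [hx₀def, EuclideanSpace.norm_single]
    refine le_trans (norm_nonneg _) (le_csSup hbdd ⟨x₀, hx₀, rfl⟩)
  -- main bound
  unfold numRadius
  rw [← hSdef]
  apply Real.sSup_le _ hsupnonneg
  rintro r ⟨c, hc, rfl⟩
  set a : ℝ := ‖c 0‖ with hadef
  set b : ℝ := ‖c 1‖ with hbdef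
  set d : ℝ := ‖c 2‖ with hddef
  have ha0 : 0 ≤ a := norm_nonneg _
  have hb0 : 0 ≤ b := norm_nonneg _
  have hd0 : 0 ≤ d := norm_nonneg _
  set F : (Fin n₁ ⊕ (Fin n₂ ⊕ Fin n₃)) → ℂ :=
    Sum.elim (fun i => (a : ℂ) * u₁ i) (Sum.elim (fun i => (b : ℂ) * y₂ i)
      (fun i => (d : ℂ) * u₃ i)) with hFdef
  set x : EuclideanSpace ℂ (Fin n₁ ⊕ (Fin n₂ ⊕ Fin n₃)) :=
    (WithLp.equiv 2 _).symm F with hxdef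
  have hxnorm : ‖x‖ = 1 := by
    rw [EuclideanSpace.norm_eq]
    have : ∑ i, ‖x i‖ ^ 2 = a ^ 2 + (b ^ 2 + d ^ 2) := by
      simp only [hxdef, WithLp.equiv_symm_apply, PiLp.toLp_apply, hFdef, Fintype.sum_sum_type,
        Sum.elim_inl, Sum.elim_inr, norm_mul, Complex.norm_real, Real.norm_eq_abs,
        abs_of_nonneg ha0, abs_of_nonneg hb0, abs_of_nonneg hd0, mul_pow,
        ← Finset.mul_sum, sum_norm_sq_of_unit hu₁norm, sum_norm_sq_of_unit hy₂norm,
        sum_norm_sq_of_unit hu₃norm, mul_one]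
    rw [this]
    have hc3 : a ^ 2 + (b ^ 2 + d ^ 2) = 1 := by
      have := sum_norm_sq_of_unit hc
      rw [Fin.sum_univ_three] at this
      rw [hadef, hbdef, hddef]; linarith
    rw [hc3, Real.sqrt_one]
  have hmv : Abig *ᵥ F = Sum.elim ((b : ℂ) • (A₁ *ᵥ fun j => y₂ j))
      (Sum.elim ((d : ℂ) • (A₂ *ᵥ fun j => u₃ j)) 0) := by
    rw [hAbigdef, Matrix.fromBlocks_mulVec,
      show F ∘ Sum.inr = Sum.elim ((b : ℂ) • (fun j => y₂ j)) ((d : ℂ) • (fun j => u₃ j))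
        from rfl,
      Matrix.fromCols_mulVec_sumElim, Matrix.fromBlocks_mulVec, Sum.elim_comp_inl,
      Sum.elim_comp_inr]
    simp [Matrix.mulVec_smul]
  have hTx : Matrix.toEuclideanLin Abig x = (WithLp.equiv 2 _).symm (Abig *ᵥ F) := by
    rw [hxdef, WithLp.equiv_symm_apply, Matrix.toEuclideanLin_apply_piLp_toLp]
  have hval : (inner ℂ x (Matrix.toEuclideanLin Abig x) : ℂ)
      = ((a * b * v₁ + b * d * v₂ : ℝ) : ℂ) := by
    rw [hTx, hmv, PiLp.inner_apply]
    simp only [hxdef, WithLp.equiv_symm_apply, PiLp.toLp_apply, hFdef, Fintype.sum_sum_type,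
      Sum.elim_inl, Sum.elim_inr, RCLike.inner_apply, Pi.smul_apply, smul_eq_mul,
      Pi.zero_apply, mul_zero, Finset.sum_const_zero, add_zero, _root_.map_mul,
      Complex.conj_ofReal]
    have e1 : ∑ i : Fin n₁, (b : ℂ) * (A₁ *ᵥ fun j => y₂ j) i * ((a : ℂ) * (starRingEnd ℂ) (u₁ i))
        = (a : ℂ) * (b : ℂ) * (v₁ : ℂ) := by
      rw [← hS₁, Finset.mul_sum]
      exact Finset.sum_congr rfl (fun i _ => by ring)
    have e2 : ∑ i : Fin n₂, (d : ℂ) * (A₂ *ᵥ fun j => u₃ j) i * ((b : ℂ) * (starRingEnd ℂ) (y₂ i))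
        = (b : ℂ) * (d : ℂ) * (v₂ : ℂ) := by
      rw [← hS₂, Finset.mul_sum]
      exact Finset.sum_congr rfl (fun i _ => by ring)
    simp only [zero_mul, Finset.sum_const_zero, add_zero]
    rw [e1, e2]
    push_cast
    ring
  have hmem : (a * b * v₁ + b * d * v₂ : ℝ) ∈ S := by
    refine ⟨x, hxnorm, ?_⟩
    rw [hval, Complex.norm_real, Real.norm_eq_abs, abs_of_nonneg (by positivity)]
  -- bound the left inner product
  have hlhs : ‖(inner ℂ c (Matrix.toEuclideanLin
      (!![0, (reducedMinModulus A₁ : ℂ), 0; 0, 0, (reducedMinModulus A₂ : ℂ); 0, 0, 0]) c) : ℂ)‖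
      ≤ a * b * reducedMinModulus A₁ + b * d * reducedMinModulus A₂ := by
    have hval2 : (inner ℂ c (Matrix.toEuclideanLin
        (!![0, (reducedMinModulus A₁ : ℂ), 0; 0, 0, (reducedMinModulus A₂ : ℂ); 0, 0, 0]) c) : ℂ)
        = (starRingEnd ℂ) (c 0) * ((reducedMinModulus A₁ : ℂ) * c 1)
          + (starRingEnd ℂ) (c 1) * ((reducedMinModulus A₂ : ℂ) * c 2) := by
      rw [PiLp.inner_apply]
      simp [RCLike.inner_apply, Matrix.toEuclideanLin_apply, Matrix.mulVec, dotProduct,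
        Fin.sum_univ_three]
      ring
    rw [hval2]
    calc ‖(starRingEnd ℂ) (c 0) * ((reducedMinModulus A₁ : ℂ) * c 1)
          + (starRingEnd ℂ) (c 1) * ((reducedMinModulus A₂ : ℂ) * c 2)‖
        ≤ ‖(starRingEnd ℂ) (c 0) * ((reducedMinModulus A₁ : ℂ) * c 1)‖
          + ‖(starRingEnd ℂ) (c 1) * ((reducedMinModulus A₂ : ℂ) * c 2)‖ :=
          norm_add_le _ _
      _ = a * b * reducedMinModulus A₁ + b * d * reducedMinModulus A₂ := by
          rw [hadef, hbdef, hddef]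
          simp only [norm_mul, Complex.norm_conj, Complex.norm_real, Real.norm_eq_abs,
            abs_of_nonneg (reducedMinModulus_nonneg A₁),
            abs_of_nonneg (reducedMinModulus_nonneg A₂)]
          ring
  refine hlhs.trans (le_trans ?_ (le_csSup hbdd hmem))
  have h1 : a * b * reducedMinModulus A₁ ≤ a * b * v₁ :=
    mul_le_mul_of_nonneg_left hγ₁le (by positivity)
  have h2 : b * d * reducedMinModulus A₂ ≤ b * d * v₂ :=
    mul_le_mul_of_nonneg_left hγ₂le (by positivity)
  linarith
end

section
/- Let A be an n×n complex block shift. Then the numerical range W(A) of A is the closed disc in ℂ centered at the origin with radius w(A); that is, W(A) = {z ∈ ℂ : |z| ≤ w(A)}. -/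
/-- The numerical range `W(M) = {⟨Mx, x⟩ : ‖x‖ = 1}` of a square complex matrix. -/
def numRange {ι : Type*} [Fintype ι] [DecidableEq ι] (M : Matrix ι ι ℂ) : Set ℂ :=
  {z : ℂ | ∃ x : EuclideanSpace ℂ ι, ‖x‖ = 1 ∧ (inner ℂ x (Matrix.toEuclideanLin M x) : ℂ) = z}

/-- A square matrix is a block shift if the coordinates can be graded by a monotone function
into consecutive blocks so that all nonzero entries lie in the superdiagonal blocks. -/
def IsBlockShift {m : ℕ} (M : Matrix (Fin m) (Fin m) ℂ) : Prop :=
  ∃ f : Fin m → ℕ, Monotone f ∧ ∀ i j, M i j ≠ 0 → f j = f i + 1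

/-- The quadratic form of a matrix as a double sum. -/
lemma inner_toEuclideanLin_eq {n : ℕ} (A : Matrix (Fin n) (Fin n) ℂ)
    (x : EuclideanSpace ℂ (Fin n)) :
    (inner ℂ x (Matrix.toEuclideanLin A x) : ℂ)
      = ∑ i, ∑ j, (starRingEnd ℂ) (x i) * (A i j * x j) := by
  rw [PiLp.inner_apply]
  simp [Matrix.toEuclideanLin_apply, Matrix.mulVec, dotProduct, Finset.mul_sum,
    RCLike.inner_apply]
  refine Finset.sum_congr rfl fun i _ => ?_
  rw [Finset.sum_mul]
  exact Finset.sum_congr rfl fun j _ => by ring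

/-- Rotation invariance of the numerical range of a block shift: multiplying the `j`-th
coordinate by `u ^ f j` rotates the quadratic form value by `u`. -/
lemma rotate_aux {n : ℕ} (A : Matrix (Fin n) (Fin n) ℂ) (f : Fin n → ℕ)
    (hf : ∀ i j, A i j ≠ 0 → f j = f i + 1) (u : ℂ) (hu : ‖u‖ = 1)
    (x : EuclideanSpace ℂ (Fin n)) :
    ∃ y : EuclideanSpace ℂ (Fin n), ‖y‖ = ‖x‖ ∧
      (inner ℂ y (Matrix.toEuclideanLin A y) : ℂ)
        = u * (inner ℂ x (Matrix.toEuclideanLin A x) : ℂ) := by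
  refine ⟨WithLp.toLp 2 (fun j => u ^ (f j) * x j : Fin n → ℂ), ?_, ?_⟩
  · rw [EuclideanSpace.norm_eq, EuclideanSpace.norm_eq]
    congr 1
    refine Finset.sum_congr rfl fun j _ => ?_
    have : ‖u ^ (f j)‖ = 1 := by
      rw [norm_pow]; simp [hu]
    simp only [PiLp.toLp_apply, norm_mul, this, one_mul]
  · rw [inner_toEuclideanLin_eq, inner_toEuclideanLin_eq, Finset.mul_sum]
    refine Finset.sum_congr rfl fun i _ => ?_
    rw [Finset.mul_sum]
    refine Finset.sum_congr rfl fun j _ => ?_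
    show (starRingEnd ℂ) (u ^ (f i) * x i) * (A i j * (u ^ (f j) * x j)) = _
    by_cases h : A i j = 0
    · simp [h]
    · have hfij := hf i j h
      have hnsq : (starRingEnd ℂ) (u ^ (f i)) * u ^ (f i) = 1 := by
        rw [Complex.conj_mul']
        norm_cast
        simp [Complex.normSq_eq_norm_sq, norm_pow, hu]
      rw [hfij, pow_succ, map_mul]
      calc (starRingEnd ℂ) (u ^ f i) * (starRingEnd ℂ) (x i) * (A i j * (u ^ f i * u * x j))
          = ((starRingEnd ℂ) (u ^ f i) * u ^ f i)
              * (u * ((starRingEnd ℂ) (x i) * (A i j * x j))) := by ring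
        _ = _ := by rw [hnsq]; ring

/-- The numerical range of a block shift is the closed disc centered at the
origin with radius equal to its numerical radius. -/
theorem numRange_blockShift_eq_closedDisc {n : ℕ} (hn : 0 < n)
    (A : Matrix (Fin n) (Fin n) ℂ) (hA : IsBlockShift A) :
    numRange A = {z : ℂ | ‖z‖ ≤ numRadius A} := by
  obtain ⟨f, _hmono, hf⟩ := hA
  have hdiag : ∀ i, A i i = 0 := by
    intro i
    by_contra h
    have := hf i i h
    omega
  set g : EuclideanSpace ℂ (Fin n) → ℝ :=
    fun x => ‖(inner ℂ x (Matrix.toEuclideanLin A x) : ℂ)‖ with hg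
  have hcont : Continuous g := by
    have h1 : Continuous fun x : EuclideanSpace ℂ (Fin n) =>
        (inner ℂ x (Matrix.toEuclideanLin A x) : ℂ) :=
      Continuous.inner continuous_id (Matrix.toEuclideanLin A).continuous_of_finiteDimensional
    exact continuous_norm.comp h1
  set S : Set (EuclideanSpace ℂ (Fin n)) := Metric.sphere 0 1 with hS
  set R : Set ℝ := g '' S with hR
  have hmemS : ∀ x : EuclideanSpace ℂ (Fin n), x ∈ S ↔ ‖x‖ = 1 := by
    intro x; rw [hS, mem_sphere_zero_iff_norm]
  have hRdef : {r : ℝ | ∃ x : EuclideanSpace ℂ (Fin n), ‖x‖ = 1 ∧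
      ‖(inner ℂ x (Matrix.toEuclideanLin A x) : ℂ)‖ = r} = R := by
    ext r
    constructor
    · rintro ⟨x, hx, hxr⟩; exact ⟨x, (hmemS x).mpr hx, hxr⟩
    · rintro ⟨x, hx, hxr⟩; exact ⟨x, (hmemS x).mp hx, hxr⟩
  have hScomp : IsCompact S := isCompact_sphere 0 1
  have hSconn : IsConnected S := by
    apply isConnected_sphere ?_ 0 zero_le_one
    have hfr : Module.finrank ℝ (EuclideanSpace ℂ (Fin n)) = 2 * n := by
      rw [← Module.finrank_mul_finrank ℝ ℂ (EuclideanSpace ℂ (Fin n)),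
        Complex.finrank_real_complex, finrank_euclideanSpace_fin]
    rw [← Module.finrank_eq_rank, hfr]
    exact_mod_cast by omega
  have hRcomp : IsCompact R := hScomp.image hcont
  have hRconn : IsPreconnected R := (hSconn.image g hcont.continuousOn).isPreconnected
  have hRne : R.Nonempty := hSconn.nonempty.image g
  have hw : numRadius A = sSup R := by rw [numRadius, hRdef]
  have hbdd : BddAbove R := hRcomp.bddAbove
  have hsupR : sSup R ∈ R := hRcomp.sSup_mem hRne
  have h0 : (0 : ℝ) ∈ R := by
    set i : Fin n := ⟨0, hn⟩
    refine ⟨EuclideanSpace.single i 1, ?_, ?_⟩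
    · rw [hmemS]
      simp [EuclideanSpace.norm_single]
    · rw [hg]
      simp only
      rw [inner_toEuclideanLin_eq]
      simp [EuclideanSpace.single_apply, Finset.sum_ite_eq, hdiag]
  have hIcc : Set.Icc (0 : ℝ) (sSup R) ⊆ R := hRconn.Icc_subset h0 hsupR
  ext z
  simp only [numRange, Set.mem_setOf_eq]
  constructor
  · rintro ⟨x, hx, rfl⟩
    rw [hw]
    exact le_csSup hbdd ⟨x, (hmemS x).mpr hx, rfl⟩
  · intro hz
    have hzR : ‖z‖ ∈ R := hIcc ⟨norm_nonneg z, by rw [← hw]; exact hz⟩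
    obtain ⟨x, hxS, hxr⟩ := hzR
    have hxnorm : ‖x‖ = 1 := (hmemS x).mp hxS
    set c : ℂ := inner ℂ x (Matrix.toEuclideanLin A x) with hc
    have hgx : ‖c‖ = ‖z‖ := hxr
    by_cases hc0 : c = 0
    · have hz0 : z = 0 := by
        have : ‖z‖ = 0 := by rw [← hgx, hc0, norm_zero]
        exact norm_eq_zero.mp this
      exact ⟨x, hxnorm, by rw [← hc, hc0, hz0]⟩
    · have hu : ‖z / c‖ = 1 := by
        rw [norm_div, hgx, div_self]
        rw [← hgx]
        exact fun habs => hc0 (norm_eq_zero.mp habs)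
      obtain ⟨y, hy, hyq⟩ := rotate_aux A f hf (z / c) hu x
      refine ⟨y, by rw [hy, hxnorm], ?_⟩
      rw [hyq, ← hc, div_mul_cancel₀ _ hc0]
end
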